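/- (B-quartet Inference Rule) Let N+ be a rooted binary phylogenetic network on n taxa, n ≥ 5, and suppose {a,b,c,d} and {b,c,d,e} are B-quartets on N+. If, on its induced 4-taxon network, any one of the sets {a,b,c,e}, {a,b,d,e}, {a,c,d,e} is either (a) a T-quartet whose associated resolved quartet (the quartet displayed on the reduced unrooted tree of blobs of the induced 4-taxon network) separates a and e, or (b) a B-quartet, then all three of {a,b,c,e}, {a,b,d,e}, {a,c,d,e} are B-quartets on N+. -/

import Mathlib

/-!
# Common framework

Finite directed multigraphs, undirected connectivity, numbers of connected
components, cut edges, subgraphs, blobs, blobs determined by leaf sets,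
B-quartets, and quartets displayed via cut-edge separation.

A *network* is modelled as a finite directed multigraph (edge directions are
simply ignored for the undirected notions of connectivity, cut edges and
blobs).
-/

/-- A finite directed multigraph: finite types of nodes and of edges, with
source and target maps. -/
structure MDigraph where
  V : Type
  E : Type
  finV : Finite V
  finE : Finite E
  src : E → V
  tgt : E → V

attribute [instance] MDigraph.finV MDigraph.finE

namespace MDigraph

section Basic

variable (G : MDigraph)

/-- One undirected step between `u` and `v` along an edge from the set `F`. -/
def Step (F : Set G.E) (u v : G.V) : Prop :=
  ∃ e ∈ F, (G.src e = u ∧ G.tgt e = v) ∨ (G.src e = v ∧ G.tgt e = u)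

/-- Undirected reachability (an undirected path) using only edges in `F`. -/
def Conn (F : Set G.E) (u v : G.V) : Prop :=
  Relation.ReflTransGen (G.Step F) u v

/-- One directed step from `u` to `v` along an edge from the set `F`. -/
def DStep (F : Set G.E) (u v : G.V) : Prop :=
  ∃ e ∈ F, G.src e = u ∧ G.tgt e = v

/-- Directed reachability (a directed path) using only edges in `F`. -/
def DConn (F : Set G.E) (u v : G.V) : Prop :=
  Relation.ReflTransGen (G.DStep F) u v

/-- `u` is above (ancestral to) `v`: there is a directed path from `u` to `v`. -/
def Above (u v : G.V) : Prop := G.DConn Set.univ u v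

/-- In-degree of a node. -/
noncomputable def inDeg (v : G.V) : ℕ := Nat.card {e : G.E // G.tgt e = v}

/-- Out-degree of a node. -/
noncomputable def outDeg (v : G.V) : ℕ := Nat.card {e : G.E // G.src e = v}

/-- Undirected degree of a node (a loop counts twice). -/
noncomputable def degree (v : G.V) : ℕ := G.inDeg v + G.outDeg v

/-- The number of connected components of the graph with node set `W` and edge
set the restriction to `W` of `F` (two nodes of `W` lie in the same connected
component iff they are joined by an undirected path). -/
noncomputable def numComponents (W : Set G.V) (F : Set G.E) : ℕ :=
  Nat.card (Quot (fun u v : W => G.Step {e ∈ F | G.src e ∈ W ∧ G.tgt e ∈ W} u.1 v.1))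

/-- `v` lies on every directed path from `u` to `w`: there is no directed path
from `u` to `w` all of whose nodes avoid `v`. -/
def OnEveryPath (v u w : G.V) : Prop :=
  ¬ (u ≠ v ∧ w ≠ v ∧
      Relation.ReflTransGen (fun a b => G.DStep Set.univ a b ∧ a ≠ v ∧ b ≠ v) u w)

end Basic

/-- A subgraph (subnetwork): a set of nodes together with a set of edges
joining them. -/
structure Subgraph (G : MDigraph) where
  verts : Set G.V
  edges : Set G.E
  src_mem : ∀ e ∈ edges, G.src e ∈ verts
  tgt_mem : ∀ e ∈ edges, G.tgt e ∈ verts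

/-- The whole graph, as a subgraph of itself. -/
def top (G : MDigraph) : Subgraph G :=
  ⟨Set.univ, Set.univ, fun _ _ => Set.mem_univ _, fun _ _ => Set.mem_univ _⟩

namespace Subgraph

variable {G : MDigraph}

/-- Containment of subgraphs. -/
def le (H K : Subgraph G) : Prop := H.verts ⊆ K.verts ∧ H.edges ⊆ K.edges

/-- The subgraph `H` is connected. -/
def IsConnected (H : Subgraph G) : Prop :=
  H.verts.Nonempty ∧ ∀ u ∈ H.verts, ∀ v ∈ H.verts, G.Conn H.edges u v

/-- Delete an edge from a subgraph. -/
def deleteEdge (H : Subgraph G) (e : G.E) : Subgraph G :=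
  ⟨H.verts, H.edges \ {e}, fun e' he' => H.src_mem e' he'.1,
    fun e' he' => H.tgt_mem e' he'.1⟩

/-- The number of connected components of a subgraph. -/
noncomputable def numComponents (H : Subgraph G) : ℕ :=
  G.numComponents H.verts H.edges

/-- `e` is a cut edge of the (sub)graph `H`: deleting it increases the number
of connected components. -/
def IsCutEdge (H : Subgraph G) (e : G.E) : Prop :=
  e ∈ H.edges ∧ H.numComponents < (H.deleteEdge e).numComponents

end Subgraph

variable {G : MDigraph}

/-- `B` is a blob of the network `H`: a maximal connected subnetwork of `H`
having no cut edges.  (A blob is *trivial* if it consists of a single node.) -/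
def IsBlobIn (H B : Subgraph G) : Prop :=
  B.le H ∧ B.IsConnected ∧ (∀ e, ¬ B.IsCutEdge e) ∧
    ∀ B' : Subgraph G, B'.le H → B'.IsConnected → (∀ e, ¬ B'.IsCutEdge e) →
      B.le B' → B'.le B

/-- `e` is a cut edge of the network `H` incident to the blob `B`: exactly one
of its endpoints is a node of `B`. -/
def IncidentCut (H B : Subgraph G) (e : G.E) : Prop :=
  H.IsCutEdge e ∧ Xor' (G.src e ∈ B.verts) (G.tgt e ∈ B.verts)

/-- The blob `B` of the network `H` is determined by the set `S` of leaf
labels: deletion of the cut edges of `H` incident to `B` leaves the nodes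
labelled by the elements of `S` in distinct connected components. -/
def DeterminesIn {X : Type} (H B : Subgraph G) (leaf : X → G.V) (S : Set X) : Prop :=
  ∀ s ∈ S, ∀ t ∈ S, s ≠ t →
    ¬ G.Conn {e ∈ H.edges | ¬ IncidentCut H B e} (leaf s) (leaf t)

/-- Four taxa form a B-quartet on the network `H`: some blob of `H` is
determined by them. -/
def BQuartetIn {X : Type} (H : Subgraph G) (leaf : X → G.V) (a b c d : X) : Prop :=
  ∃ B : Subgraph G, IsBlobIn H B ∧ DeterminesIn H B leaf ({a, b, c, d} : Set X)

/-- Some cut edge of `H` separates the taxa `p, q` from the taxa `r, s`: after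
its deletion `p, q` lie in one connected component and `r, s` in another.  For
a 4-taxon set `{p,q,r,s}` this says exactly that the (reduced unrooted) tree of
blobs of `H` displays the resolved quartet `pq|rs` (the edges of the tree of
blobs correspond exactly to the cut edges of the network, and suppressing
degree-2 nodes or contracting blobs does not affect which taxa a cut edge
separates). -/
def CutSep {X : Type} (H : Subgraph G) (leaf : X → G.V) (p q r s : X) : Prop :=
  ∃ e, H.IsCutEdge e ∧
    G.Conn (H.edges \ {e}) (leaf p) (leaf q) ∧
    G.Conn (H.edges \ {e}) (leaf r) (leaf s) ∧
    ¬ G.Conn (H.edges \ {e}) (leaf p) (leaf r)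

end MDigraph
open MDigraph in
/-- A rooted binary phylogenetic network on the taxon set `X`: a connected
directed acyclic graph whose node set consists of a root (in-degree 0,
out-degree 2), leaves (in-degree 1, out-degree 0) bijectively labelled by `X`,
tree nodes (in-degree 1, out-degree 2) and hybrid nodes (in-degree 2,
out-degree 1). -/
structure PhyloNetwork (X : Type) extends MDigraph where
  root : toMDigraph.V
  leaf : X → toMDigraph.V
  leaf_inj : Function.Injective leaf
  root_in : toMDigraph.inDeg root = 0
  root_out : toMDigraph.outDeg root = 2
  leaf_in : ∀ x, toMDigraph.inDeg (leaf x) = 1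
  leaf_out : ∀ x, toMDigraph.outDeg (leaf x) = 0
  internal : ∀ v, v ≠ root → (∀ x, v ≠ leaf x) →
      (toMDigraph.inDeg v = 1 ∧ toMDigraph.outDeg v = 2) ∨
      (toMDigraph.inDeg v = 2 ∧ toMDigraph.outDeg v = 1)
  acyclic : ∀ v, ¬ Relation.TransGen (toMDigraph.DStep Set.univ) v v
  conn : ∀ u v, toMDigraph.Conn Set.univ u v

namespace PhyloNetwork

open MDigraph

variable {X : Type} (N : PhyloNetwork X)

/-- The subnetwork of `N⁺` consisting of all nodes and edges ancestral to at
least one taxon in `Y`.  Since suppressing nodes of in- and out-degree 1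
affects neither blobs, nor cut edges, nor which sets of taxa they separate,
this subnetwork faithfully represents the induced network `N⁺_Y`. -/
def inducedSub (Y : Set X) : Subgraph N.toMDigraph where
  verts := {v | ∃ y ∈ Y, N.toMDigraph.Above v (N.leaf y)}
  edges := {e | ∃ y ∈ Y, N.toMDigraph.Above (N.toMDigraph.tgt e) (N.leaf y)}
  src_mem := by
    rintro e ⟨y, hy, h⟩
    exact ⟨y, hy, Relation.ReflTransGen.head ⟨e, Set.mem_univ e, rfl, rfl⟩ h⟩
  tgt_mem := by
    rintro e ⟨y, hy, h⟩
    exact ⟨y, hy, h⟩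

/-- `v` is a stable ancestor of the leaves: it is ancestral to every leaf and
lies on every directed path from the root to any leaf. -/
def IsStableAncestor (v : N.toMDigraph.V) : Prop :=
  (∀ x, N.toMDigraph.Above v (N.leaf x)) ∧
  ∀ x, N.toMDigraph.OnEveryPath v N.root (N.leaf x)

/-- `v` is the lowest stable ancestor (LSA) of the network: a stable ancestor
below all stable ancestors. -/
def IsLSA (v : N.toMDigraph.V) : Prop :=
  N.IsStableAncestor v ∧ ∀ u, N.IsStableAncestor u → N.toMDigraph.Above u v

/-- The number of cut edges of `N⁺` incident to the blob `B`. -/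
noncomputable def blobDeg (B : Subgraph N.toMDigraph) : ℕ :=
  Nat.card {e : N.toMDigraph.E // IncidentCut (top N.toMDigraph) B e}

/-- `B` is an `m`-blob of the rooted network `N⁺`: if the root is not in `B`
then `B` has exactly `m` incident cut edges, while if the root is in `B` then
`B` has exactly `m - 1` incident cut edges. -/
def IsMBlob (B : Subgraph N.toMDigraph) (m : ℕ) : Prop :=
  IsBlobIn (top N.toMDigraph) B ∧
    ((N.root ∈ B.verts ∧ m = N.blobDeg B + 1) ∨ (N.root ∉ B.verts ∧ m = N.blobDeg B))

end PhyloNetwork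

open MDigraph

/-- On the induced 4-taxon network on `{p,q,r,s}` (represented by the
subnetwork of nodes and edges ancestral to one of these four taxa), the set
`{p,q,r,s}` is a T-quartet whose associated resolved quartet — the quartet
displayed on the reduced unrooted tree of blobs of the induced 4-taxon
network — separates `p` and `s` (i.e. the quartet is `pq|rs` or `pr|qs`). -/
def TSepInduced {X : Type} (N : PhyloNetwork X) (p q r s : X) : Prop :=
  ¬ BQuartetIn (N.inducedSub {p, q, r, s}) N.leaf p q r s ∧
    (CutSep (N.inducedSub {p, q, r, s}) N.leaf p q r s ∨
     CutSep (N.inducedSub {p, q, r, s}) N.leaf p r q s)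

/-- The hypothesis of the B-quartet inference rule for the 4-taxon set
`{p,q,r,s}`: on its induced 4-taxon network the set is either a T-quartet
whose associated resolved quartet separates `p` and `s`, or a B-quartet. -/
def RuleHyp {X : Type} (N : PhyloNetwork X) (p q r s : X) : Prop :=
  TSepInduced N p q r s ∨
    BQuartetIn (N.inducedSub {p, q, r, s}) N.leaf p q r s

/-! ### Auxiliary development for the proof -/

namespace MDigraph

variable {G : MDigraph}

lemma Step.symm' {F : Set G.E} {u v : G.V} (h : G.Step F u v) : G.Step F v u := by
  obtain ⟨e, he, h | h⟩ := h
  exacts [⟨e, he, Or.inr h⟩, ⟨e, he, Or.inl h⟩]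

lemma step_symmetric (F : Set G.E) : Symmetric (G.Step F) := fun _ _ h => h.symm'

lemma Conn.symm {F : Set G.E} {u v : G.V} (h : G.Conn F u v) : G.Conn F v u :=
  (@Relation.ReflTransGen.symmetric _ _ ⟨fun _ _ h => step_symmetric F h⟩).symm _ _ h

lemma Conn.trans {F : Set G.E} {u v w : G.V} (h : G.Conn F u v) (h' : G.Conn F v w) :
    G.Conn F u w := Relation.ReflTransGen.trans h h'

lemma conn_refl (F : Set G.E) (u : G.V) : G.Conn F u u := Relation.ReflTransGen.refl

lemma Step.mono {F F' : Set G.E} (hFF : F ⊆ F') {u v : G.V} (h : G.Step F u v) :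
    G.Step F' u v := by obtain ⟨e, he, h⟩ := h; exact ⟨e, hFF he, h⟩

lemma Conn.mono {F F' : Set G.E} (hFF : F ⊆ F') {u v : G.V} (h : G.Conn F u v) :
    G.Conn F' u v := by
  induction h with
  | refl => exact conn_refl _ _
  | tail _ h ih => exact ih.tail (h.mono hFF)

lemma conn_edge {F : Set G.E} {e : G.E} (he : e ∈ F) : G.Conn F (G.src e) (G.tgt e) :=
  Relation.ReflTransGen.single ⟨e, he, Or.inl ⟨rfl, rfl⟩⟩

/-- Crossing lemma: an undirected walk from inside `A` to outside `A` uses an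
edge with exactly one endpoint in `A`. -/
lemma conn_cross {F : Set G.E} {A : Set G.V} {u v : G.V} (h : G.Conn F u v)
    (hu : u ∈ A) (hv : v ∉ A) :
    ∃ e ∈ F, (G.src e ∈ A ∧ G.tgt e ∉ A) ∨ (G.tgt e ∈ A ∧ G.src e ∉ A) := by
  revert hu
  induction h using Relation.ReflTransGen.head_induction_on with
  | refl => exact fun hu => absurd hu hv
  | @head a c step rest ih =>
    intro hu
    by_cases hc : c ∈ A
    · exact ih hc
    · obtain ⟨e, he, hcase | hcase⟩ := step
      · exact ⟨e, he, Or.inl ⟨hcase.1 ▸ hu, hcase.2 ▸ hc⟩⟩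
      · exact ⟨e, he, Or.inr ⟨hcase.2 ▸ hu, hcase.1 ▸ hc⟩⟩

section comp

variable {W : Set G.V} {F : Set G.E}

/-- The relation whose quotient counts connected components. -/
abbrev compRel (G : MDigraph) (W : Set G.V) (F : Set G.E) : W → W → Prop :=
  fun u v : W => G.Step {e ∈ F | G.src e ∈ W ∧ G.tgt e ∈ W} u.1 v.1

lemma numComponents_def (W : Set G.V) (F : Set G.E) :
    G.numComponents W F = Nat.card (Quot (compRel G W F)) := rfl

lemma rtg_quot_eq {α : Type} {r : α → α → Prop} {a b : α}
    (h : Relation.ReflTransGen r a b) : Quot.mk r a = Quot.mk r b := by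
  induction h with
  | refl => rfl
  | tail _ h ih => exact ih.trans (Quot.sound h)

lemma subtype_rtg (h : G.Conn {e ∈ F | G.src e ∈ W ∧ G.tgt e ∈ W} u v)
    (hu : u ∈ W) (hv : v ∈ W) :
    Relation.ReflTransGen (compRel G W F) ⟨u, hu⟩ ⟨v, hv⟩ := by
  revert hu
  induction h using Relation.ReflTransGen.head_induction_on with
  | refl => intro hu; rfl
  | @head a c step rest ih =>
    intro hu
    have hc : c ∈ W := by
      obtain ⟨e, ⟨_, hs, ht⟩, hcase | hcase⟩ := step
      · exact hcase.2 ▸ ht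
      · exact hcase.1 ▸ hs
    exact Relation.ReflTransGen.head (show compRel G W F ⟨a, hu⟩ ⟨c, hc⟩ from step) (ih hc)

lemma subtype_rtg_proj {p q : W} (h : Relation.ReflTransGen (compRel G W F) p q) :
    G.Conn {e ∈ F | G.src e ∈ W ∧ G.tgt e ∈ W} p.1 q.1 := by
  induction h with
  | refl => exact conn_refl _ _
  | tail _ h ih => exact ih.tail h

lemma eqvGen_rtg {α : Type} {r : α → α → Prop} (hr : Symmetric r) {a b : α}
    (h : Relation.EqvGen r a b) : Relation.ReflTransGen r a b := by
  induction h with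
  | rel _ _ h => exact Relation.ReflTransGen.single h
  | refl => exact Relation.ReflTransGen.refl
  | symm _ _ _ ih => exact (@Relation.ReflTransGen.symmetric _ _ ⟨fun _ _ h => hr h⟩).symm _ _ ih
  | trans _ _ _ _ _ ih1 ih2 => exact ih1.trans ih2

lemma compRel_symmetric : Symmetric (compRel G W F) := fun _ _ h => h.symm'

lemma numComponents_eq_one (hne : W.Nonempty)
    (hconn : ∀ u ∈ W, ∀ v ∈ W, G.Conn {e ∈ F | G.src e ∈ W ∧ G.tgt e ∈ W} u v) :
    G.numComponents W F = 1 := by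
  obtain ⟨w, hw⟩ := hne
  rw [numComponents_def]
  rw [Nat.card_eq_one_iff_unique]
  constructor
  · constructor
    intro p q
    induction p using Quot.ind
    induction q using Quot.ind
    rename_i p q
    exact rtg_quot_eq (subtype_rtg (hconn p.1 p.2 q.1 q.2) p.2 q.2)
  · exact ⟨Quot.mk _ ⟨w, hw⟩⟩

lemma conn_of_numComponents_eq_one (h : G.numComponents W F = 1)
    {u v : G.V} (hu : u ∈ W) (hv : v ∈ W) :
    G.Conn {e ∈ F | G.src e ∈ W ∧ G.tgt e ∈ W} u v := by
  rw [numComponents_def] at h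
  have hs : Subsingleton (Quot (compRel G W F)) := (Nat.card_eq_one_iff_unique.mp h).1
  have heq : Quot.mk (compRel G W F) (⟨u, hu⟩ : W) = Quot.mk (compRel G W F) (⟨v, hv⟩ : W) :=
    Subsingleton.elim _ _
  exact subtype_rtg_proj (eqvGen_rtg compRel_symmetric (Quot.eq.mp heq))

lemma one_le_numComponents (hne : W.Nonempty) : 1 ≤ G.numComponents W F := by
  obtain ⟨w, hw⟩ := hne
  rw [numComponents_def]
  have : Nonempty (Quot (compRel G W F)) := ⟨Quot.mk _ ⟨w, hw⟩⟩
  exact Nat.card_pos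

lemma two_le_numComponents {u v : G.V} (hu : u ∈ W) (hv : v ∈ W)
    (h : ¬ G.Conn {e ∈ F | G.src e ∈ W ∧ G.tgt e ∈ W} u v) :
    2 ≤ G.numComponents W F := by
  rw [numComponents_def]
  have hne : Quot.mk _ (⟨u, hu⟩ : W) ≠ Quot.mk _ (⟨v, hv⟩ : W) := fun heq =>
    h (subtype_rtg_proj (eqvGen_rtg compRel_symmetric (Quot.eq.mp heq)))
  have : Nontrivial (Quot (compRel G W F)) := ⟨_, _, hne⟩
  exact Finite.one_lt_card_iff_nontrivial.mpr this

lemma numComponents_congr {F F' : Set G.E}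
    (h : ∀ u v : G.V, u ∈ W → v ∈ W →
      (G.Conn {e ∈ F | G.src e ∈ W ∧ G.tgt e ∈ W} u v ↔
       G.Conn {e ∈ F' | G.src e ∈ W ∧ G.tgt e ∈ W} u v)) :
    G.numComponents W F = G.numComponents W F' := by
  rw [numComponents_def, numComponents_def]
  refine Nat.card_congr ⟨
    Quot.lift (fun p => Quot.mk (compRel G W F') p) ?_,
    Quot.lift (fun p => Quot.mk (compRel G W F) p) ?_, ?_, ?_⟩
  · intro p q hpq
    have : G.Conn {e ∈ F' | G.src e ∈ W ∧ G.tgt e ∈ W} p.1 q.1 :=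
      (h p.1 q.1 p.2 q.2).mp (Relation.ReflTransGen.single hpq)
    exact rtg_quot_eq (subtype_rtg this p.2 q.2)
  · intro p q hpq
    have : G.Conn {e ∈ F | G.src e ∈ W ∧ G.tgt e ∈ W} p.1 q.1 :=
      (h p.1 q.1 p.2 q.2).mpr (Relation.ReflTransGen.single hpq)
    exact rtg_quot_eq (subtype_rtg this p.2 q.2)
  · intro p; induction p using Quot.ind; rfl
  · intro p; induction p using Quot.ind; rfl

end comp

section subg

variable {H : Subgraph G}

lemma Subgraph.edges_restrict (H : Subgraph G) :
    {e ∈ H.edges | G.src e ∈ H.verts ∧ G.tgt e ∈ H.verts} = H.edges :=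
  Set.ext fun e => ⟨fun h => h.1, fun h => ⟨h, H.src_mem e h, H.tgt_mem e h⟩⟩

lemma Subgraph.edges_del_restrict (H : Subgraph G) (f : G.E) :
    {e ∈ H.edges \ {f} | G.src e ∈ H.verts ∧ G.tgt e ∈ H.verts} = H.edges \ {f} :=
  Set.ext fun e => ⟨fun h => h.1, fun h => ⟨h, H.src_mem e h.1, H.tgt_mem e h.1⟩⟩

/-- Replacing uses of an edge `g` whose endpoints remain connected. -/
lemma conn_del_replace {F : Set G.E} {g : G.E}
    (hg : G.Conn (F \ {g}) (G.src g) (G.tgt g)) {u v : G.V} (h : G.Conn F u v) :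
    G.Conn (F \ {g}) u v := by
  induction h with
  | refl => exact conn_refl _ _
  | tail _ hstep ih =>
    obtain ⟨e, he, hcase | hcase⟩ := hstep
    · by_cases heg : e = g
      · subst heg
        exact ih.trans (hcase.1 ▸ hcase.2 ▸ hg)
      · exact ih.tail ⟨e, ⟨he, heg⟩, Or.inl hcase⟩
    · by_cases heg : e = g
      · subst heg
        exact ih.trans (hcase.1 ▸ hcase.2 ▸ hg.symm)
      · exact ih.tail ⟨e, ⟨he, heg⟩, Or.inr hcase⟩

/-- Decomposition of a walk relative to a possibly-used edge `g`. -/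
lemma conn_decomp {F : Set G.E} {g : G.E} {x y : G.V} (h : G.Conn F x y) :
    G.Conn (F \ {g}) x y ∨
    (G.Conn (F \ {g}) x (G.src g) ∧ G.Conn (F \ {g}) (G.tgt g) y) ∨
    (G.Conn (F \ {g}) x (G.tgt g) ∧ G.Conn (F \ {g}) (G.src g) y) := by
  induction h using Relation.ReflTransGen.head_induction_on with
  | refl => exact Or.inl (conn_refl _ _)
  | @head a c step rest ih =>
    obtain ⟨e, he, hcase⟩ := step
    by_cases heg : e = g
    · subst heg
      rcases hcase with ⟨h1, h2⟩ | ⟨h1, h2⟩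
      · rcases ih with hc | ⟨hc1, hc2⟩ | ⟨hc1, hc2⟩
        · exact Or.inr (Or.inl ⟨h1 ▸ conn_refl _ _, h2 ▸ hc⟩)
        · exact Or.inr (Or.inl ⟨h1 ▸ conn_refl _ _, hc2⟩)
        · exact Or.inl (h1 ▸ hc2)
      · rcases ih with hc | ⟨hc1, hc2⟩ | ⟨hc1, hc2⟩
        · exact Or.inr (Or.inr ⟨h2 ▸ conn_refl _ _, h1 ▸ hc⟩)
        · exact Or.inl (h2 ▸ hc2)
        · exact Or.inr (Or.inr ⟨h2 ▸ conn_refl _ _, hc2⟩)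
    · have hstep : G.Step (F \ {g}) a c := ⟨e, ⟨he, heg⟩, hcase⟩
      rcases ih with hc | ⟨hc1, hc2⟩ | ⟨hc1, hc2⟩
      · exact Or.inl (Relation.ReflTransGen.head hstep hc)
      · exact Or.inr (Or.inl ⟨Relation.ReflTransGen.head hstep hc1, hc2⟩)
      · exact Or.inr (Or.inr ⟨Relation.ReflTransGen.head hstep hc1, hc2⟩)

/-- A cut edge of a subgraph disconnects its endpoints. -/
lemma not_conn_of_isCutEdge {e : G.E} (h : H.IsCutEdge e) :
    ¬ G.Conn (H.edges \ {e}) (G.src e) (G.tgt e) := by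
  intro hc
  have : H.numComponents = (H.deleteEdge e).numComponents := by
    unfold Subgraph.numComponents Subgraph.deleteEdge
    refine numComponents_congr fun u v hu hv => ?_
    rw [H.edges_restrict]
    rw [show {e' ∈ H.edges \ {e} | G.src e' ∈ H.verts ∧ G.tgt e' ∈ H.verts}
        = H.edges \ {e} from H.edges_del_restrict e]
    constructor
    · exact fun hconn => conn_del_replace hc hconn
    · exact fun hconn => hconn.mono Set.diff_subset
  exact absurd h.2 (by omega)

/-- If a subgraph remains connected after deleting an edge, this edge is not a
cut edge. -/
lemma not_cut_of_del_conn {e : G.E} (hne : H.verts.Nonempty)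
    (h : ∀ u ∈ H.verts, ∀ v ∈ H.verts, G.Conn (H.edges \ {e}) u v) :
    ¬ H.IsCutEdge e := by
  rintro ⟨_, hlt⟩
  have h1 : (H.deleteEdge e).numComponents = 1 := by
    unfold Subgraph.numComponents Subgraph.deleteEdge
    refine numComponents_eq_one hne fun u hu v hv => ?_
    rw [show {e' ∈ H.edges \ {e} | G.src e' ∈ H.verts ∧ G.tgt e' ∈ H.verts}
        = H.edges \ {e} from H.edges_del_restrict e]
    exact h u hu v hv
  have h2 : 1 ≤ H.numComponents := one_le_numComponents hne
  omega

/-- In a connected subgraph without cut edges, any two nodes remain connected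
after deleting any edge. -/
lemma conn_del_of_not_cut (hconn : H.IsConnected) (e : G.E)
    (hnc : ¬ H.IsCutEdge e) {u v : G.V} (hu : u ∈ H.verts) (hv : v ∈ H.verts) :
    G.Conn (H.edges \ {e}) u v := by
  have h1 : H.numComponents = 1 := by
    unfold Subgraph.numComponents
    refine numComponents_eq_one hconn.1 fun u hu v hv => ?_
    rw [H.edges_restrict]
    exact hconn.2 u hu v hv
  by_cases he : e ∈ H.edges
  · have hnlt : ¬ H.numComponents < (H.deleteEdge e).numComponents := fun hlt => hnc ⟨he, hlt⟩
    have h2 : (H.deleteEdge e).numComponents = 1 := by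
      have hle : (H.deleteEdge e).numComponents ≤ 1 := by omega
      have hge : 1 ≤ (H.deleteEdge e).numComponents := one_le_numComponents hconn.1
      omega
    have := conn_of_numComponents_eq_one (W := H.verts) (F := H.edges \ {e})
      (by unfold Subgraph.numComponents Subgraph.deleteEdge at h2; exact h2) hu hv
    rwa [H.edges_del_restrict e] at this
  · have : H.edges \ {e} = H.edges := by
      ext f; simp only [Set.mem_diff, Set.mem_singleton_iff]
      exact ⟨fun h => h.1, fun h => ⟨h, fun hfe => he (hfe ▸ h)⟩⟩
    rw [this]
    exact hconn.2 u hu v hv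

end subg

section directed

lemma DConn.toConn {F : Set G.E} {u v : G.V} (h : G.DConn F u v) : G.Conn F u v := by
  induction h with
  | refl => exact conn_refl _ _
  | tail _ h ih => exact ih.tail (by obtain ⟨e, he, h1, h2⟩ := h; exact ⟨e, he, Or.inl ⟨h1, h2⟩⟩)

lemma DConn.mono {F F' : Set G.E} (hFF : F ⊆ F') {u v : G.V} (h : G.DConn F u v) :
    G.DConn F' u v := by
  induction h with
  | refl => exact Relation.ReflTransGen.refl
  | tail _ h ih => exact ih.tail (by obtain ⟨e, he, h1, h2⟩ := h; exact ⟨e, hFF he, h1, h2⟩)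

/-- Restrict a directed walk to "good" edges, maintaining an invariant. -/
lemma dconn_restrict_inv {E0 S : Set G.E} {I : G.V → Prop} {w : G.V}
    (hstep : ∀ e ∈ E0, I (G.src e) → G.DConn E0 (G.tgt e) w → I (G.tgt e) ∧ e ∈ S) :
    ∀ z, I z → G.DConn E0 z w → G.DConn S z w := by
  intro z hz h
  revert hz
  induction h using Relation.ReflTransGen.head_induction_on with
  | refl => intro _; exact Relation.ReflTransGen.refl
  | @head a c step rest ih =>
    intro hz
    obtain ⟨e, he, hs, ht⟩ := step
    obtain ⟨h1, h2⟩ := hstep e he (hs ▸ hz) (ht ▸ rest)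
    exact Relation.ReflTransGen.head ⟨e, h2, hs, ht⟩ (ih (ht ▸ h1))

/-- A directed walk from the head of an edge `f` never needs `f` (acyclicity). -/
lemma dconn_avoid_head (hacyc : ∀ v, ¬ Relation.TransGen (G.DStep Set.univ) v v) (f : G.E) :
    ∀ z w, G.DConn Set.univ z w → G.DConn Set.univ (G.tgt f) z →
      G.DConn (Set.univ \ {f}) z w := by
  intro z w h
  induction h using Relation.ReflTransGen.head_induction_on with
  | refl => intro _; exact Relation.ReflTransGen.refl
  | @head a c step rest ih =>
    intro hvz
    obtain ⟨e, _, hs, ht⟩ := step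
    by_cases hef : e = f
    · exfalso
      subst hef
      exact hacyc (G.tgt e) (Relation.TransGen.tail' (ht ▸ hvz) ⟨e, Set.mem_univ e, hs, rfl⟩)
    · exact Relation.ReflTransGen.head ⟨e, ⟨Set.mem_univ e, hef⟩, hs, ht⟩
        (ih (hvz.tail ⟨e, Set.mem_univ e, hs, ht⟩))

/-- Directed crossing lemma. -/
lemma dconn_cross {E0 : Set G.E} {A : Set G.V} {z w : G.V} (h : G.DConn E0 z w)
    (hz : z ∈ A) (hw : w ∉ A) : ∃ e ∈ E0, G.src e ∈ A ∧ G.tgt e ∉ A := by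
  revert hz
  induction h using Relation.ReflTransGen.head_induction_on with
  | refl => exact fun hz => absurd hz hw
  | @head a c step rest ih =>
    intro hz
    by_cases hc : c ∈ A
    · exact ih hc
    · obtain ⟨e, he, hs, ht⟩ := step
      exact ⟨e, he, hs ▸ hz, ht ▸ hc⟩

/-- If the edge set never leaves `A`, directed walks stay in `A`. -/
lemma dconn_stay {A : Set G.V} (hstay : ∀ e, G.src e ∈ A → G.tgt e ∈ A)
    {z w : G.V} (hz : z ∈ A) (h : G.DConn Set.univ z w) : w ∈ A := by
  revert hz
  induction h using Relation.ReflTransGen.head_induction_on with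
  | refl => exact id
  | @head a c step rest ih =>
    intro hz
    obtain ⟨e, _, hs, ht⟩ := step
    exact ih (ht ▸ hstay e (hs ▸ hz))

/-- If `f` is the unique edge entering `A`, directed walks from outside `A` to
inside `A` pass through the head of `f`. -/
lemma dconn_enter {A : Set G.V} {f : G.E}
    (hf : ∀ e, G.src e ∉ A → G.tgt e ∈ A → e = f) :
    ∀ z, z ∉ A → ∀ w, w ∈ A → G.DConn Set.univ z w → G.DConn Set.univ (G.tgt f) w := by
  intro z hz w hw h
  revert hz
  induction h using Relation.ReflTransGen.head_induction_on with
  | refl => exact fun hz => absurd hw hz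
  | @head a c step rest ih =>
    intro hz
    by_cases hc : c ∈ A
    · obtain ⟨e, _, hs, ht⟩ := step
      have := hf e (hs ▸ hz) (ht ▸ hc)
      subst this
      exact ht ▸ rest
    · exact ih hc

/-- If `f` is the unique edge leaving `A`, a directed walk from inside `A`
either stays in `A` or passes through the tail of `f`. -/
lemma dconn_exit {A : Set G.V} {f : G.E}
    (hf : ∀ e, G.src e ∈ A → G.tgt e ∉ A → e = f) :
    ∀ z, z ∈ A → ∀ w, G.DConn Set.univ z w →
      w ∈ A ∨ (G.DConn Set.univ z (G.src f) ∧ G.DConn Set.univ (G.tgt f) w) := by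
  intro z hz w h
  revert hz
  induction h using Relation.ReflTransGen.head_induction_on with
  | refl => exact fun hz => Or.inl hz
  | @head a c step rest ih =>
    intro hz
    by_cases hc : c ∈ A
    · rcases ih hc with h | ⟨h1, h2⟩
      · exact Or.inl h
      · exact Or.inr ⟨Relation.ReflTransGen.head step h1, h2⟩
    · obtain ⟨e, _, hs, ht⟩ := step
      have := hf e (hs ▸ hz) (ht ▸ hc)
      subst this
      exact Or.inr ⟨hs ▸ Relation.ReflTransGen.refl, ht ▸ rest⟩

end directed

section walklist

/-- Explicit walks as lists of edges. -/
def WalkL (G : MDigraph) (F : Set G.E) : G.V → List G.E → G.V → Prop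
  | x, [], y => x = y
  | x, e :: l, y => e ∈ F ∧ ((G.src e = x ∧ G.WalkL F (G.tgt e) l y) ∨
      (G.tgt e = x ∧ G.WalkL F (G.src e) l y))

variable {F : Set G.E}

lemma walkL_conn : ∀ {l : List G.E} {x y : G.V}, G.WalkL F x l y → G.Conn F x y := by
  intro l
  induction l with
  | nil => intro x y h; exact h ▸ conn_refl _ _
  | cons e t ih =>
    intro x y h
    obtain ⟨he, ⟨h1, h2⟩ | ⟨h1, h2⟩⟩ := h
    · exact Relation.ReflTransGen.head ⟨e, he, Or.inl ⟨h1, rfl⟩⟩ (ih h2)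
    · exact Relation.ReflTransGen.head ⟨e, he, Or.inr ⟨rfl, h1⟩⟩ (ih h2)

lemma conn_walkL {x y : G.V} (h : G.Conn F x y) : ∃ l, G.WalkL F x l y := by
  induction h using Relation.ReflTransGen.head_induction_on with
  | refl => exact ⟨[], rfl⟩
  | @head a c step rest ih =>
    obtain ⟨l, hl⟩ := ih
    obtain ⟨e, he, ⟨h1, h2⟩ | ⟨h1, h2⟩⟩ := step
    · exact ⟨e :: l, he, Or.inl ⟨h1, h2 ▸ hl⟩⟩
    · exact ⟨e :: l, he, Or.inr ⟨h2, h1 ▸ hl⟩⟩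

lemma walkL_append {l₁ l₂ : List G.E} {x y : G.V} :
    G.WalkL F x (l₁ ++ l₂) y ↔ ∃ m, G.WalkL F x l₁ m ∧ G.WalkL F m l₂ y := by
  induction l₁ generalizing x with
  | nil =>
    simp only [List.nil_append]
    exact ⟨fun h => ⟨x, rfl, h⟩, fun ⟨m, hm, h⟩ => hm ▸ h⟩
  | cons e t ih =>
    simp only [List.cons_append, WalkL]
    constructor
    · rintro ⟨he, ⟨h1, h2⟩ | ⟨h1, h2⟩⟩
      · obtain ⟨m, hm1, hm2⟩ := ih.mp h2
        exact ⟨m, ⟨he, Or.inl ⟨h1, hm1⟩⟩, hm2⟩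
      · obtain ⟨m, hm1, hm2⟩ := ih.mp h2
        exact ⟨m, ⟨he, Or.inr ⟨h1, hm1⟩⟩, hm2⟩
    · rintro ⟨m, ⟨he, ⟨h1, h2⟩ | ⟨h1, h2⟩⟩, hm2⟩
      · exact ⟨he, Or.inl ⟨h1, ih.mpr ⟨m, h2, hm2⟩⟩⟩
      · exact ⟨he, Or.inr ⟨h1, ih.mpr ⟨m, h2, hm2⟩⟩⟩

lemma walkL_mem : ∀ {l : List G.E} {x y : G.V}, G.WalkL F x l y → ∀ e ∈ l, e ∈ F := by
  intro l
  induction l with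
  | nil => intro x y _ e he; simp at he
  | cons e' t ih =>
    intro x y h e he
    rcases List.mem_cons.mp he with rfl | he
    · exact h.1
    · rcases h.2 with ⟨_, h2⟩ | ⟨_, h2⟩
      exacts [ih h2 e he, ih h2 e he]

lemma walkL_sub {F' : Set G.E} (hFF : F ⊆ F') :
    ∀ {l : List G.E} {x y : G.V}, G.WalkL F x l y → G.WalkL F' x l y := by
  intro l
  induction l with
  | nil => exact fun h => h
  | cons e t ih =>
    rintro x y ⟨he, ⟨h1, h2⟩ | ⟨h1, h2⟩⟩
    exacts [⟨hFF he, Or.inl ⟨h1, ih h2⟩⟩, ⟨hFF he, Or.inr ⟨h1, ih h2⟩⟩]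

lemma walkL_self : ∀ {l : List G.E} {x y : G.V}, G.WalkL F x l y →
    G.WalkL {e | e ∈ l} x l y := by
  intro l
  induction l with
  | nil => exact fun h => h
  | cons e t ih =>
    rintro x y ⟨he, ⟨h1, h2⟩ | ⟨h1, h2⟩⟩
    · exact ⟨List.mem_cons_self, Or.inl ⟨h1,
        walkL_sub (fun e' (he' : e' ∈ t) => List.mem_cons_of_mem e he') (ih h2)⟩⟩
    · exact ⟨List.mem_cons_self, Or.inr ⟨h1,
        walkL_sub (fun e' (he' : e' ∈ t) => List.mem_cons_of_mem e he') (ih h2)⟩⟩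

lemma walkL_reach : ∀ {l : List G.E} {x y : G.V}, G.WalkL F x l y →
    ∀ e ∈ l, G.Conn {e' | e' ∈ l} x (G.src e) ∧ G.Conn {e' | e' ∈ l} x (G.tgt e) := by
  intro l
  induction l with
  | nil => intro x y _ e he; simp at he
  | cons e' t ih =>
    intro x y h e he
    have hsub : {e'' | e'' ∈ t} ⊆ {e'' | e'' ∈ e' :: t} :=
      fun e'' (he'' : e'' ∈ t) => List.mem_cons_of_mem e' he''
    have hstep : G.Conn {e'' | e'' ∈ e' :: t} x (G.src e') ∧
        G.Conn {e'' | e'' ∈ e' :: t} x (G.tgt e') := by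
      rcases h.2 with ⟨h1, _⟩ | ⟨h1, _⟩
      · exact ⟨h1 ▸ conn_refl _ _,
          Relation.ReflTransGen.single ⟨e', List.mem_cons_self, Or.inl ⟨h1, rfl⟩⟩⟩
      · exact ⟨Relation.ReflTransGen.single ⟨e', List.mem_cons_self, Or.inr ⟨rfl, h1⟩⟩,
          h1 ▸ conn_refl _ _⟩
    rcases List.mem_cons.mp he with rfl | he
    · exact hstep
    · rcases h.2 with ⟨_, h2⟩ | ⟨_, h2⟩
      · have := ih h2 e he
        have hx : G.Conn {e'' | e'' ∈ e' :: t} x (G.tgt e') := hstep.2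
        exact ⟨hx.trans ((this.1).mono hsub), hx.trans ((this.2).mono hsub)⟩
      · have := ih h2 e he
        have hx : G.Conn {e'' | e'' ∈ e' :: t} x (G.src e') := hstep.1
        exact ⟨hx.trans ((this.1).mono hsub), hx.trans ((this.2).mono hsub)⟩

lemma exists_dup_decomp {α : Type} {l : List α} (h : ¬ l.Nodup) :
    ∃ (a : α) (l₁ l₂ l₃ : List α), l = l₁ ++ a :: l₂ ++ a :: l₃ := by
  induction l with
  | nil => simp at h
  | cons e t ih =>
    by_cases he : e ∈ t
    · obtain ⟨s, u, rfl⟩ := List.append_of_mem he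
      exact ⟨e, [], s, u, by simp⟩
    · have : ¬ t.Nodup := fun hn => h (List.nodup_cons.mpr ⟨he, hn⟩)
      obtain ⟨a, l₁, l₂, l₃, rfl⟩ := ih this
      exact ⟨a, e :: l₁, l₂, l₃, rfl⟩

lemma walkL_nodup_aux : ∀ (n : ℕ) (l : List G.E) (x y : G.V), l.length ≤ n →
    G.WalkL F x l y → ∃ l', l'.Nodup ∧ G.WalkL F x l' y := by
  intro n
  induction n with
  | zero =>
    intro l x y hlen h
    rw [Nat.le_zero, List.length_eq_zero_iff] at hlen
    exact ⟨l, hlen ▸ List.nodup_nil, h⟩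
  | succ n ih =>
    intro l x y hlen h
    by_cases hnd : l.Nodup
    · exact ⟨l, hnd, h⟩
    · obtain ⟨a, l₁, l₂, l₃, rfl⟩ := exists_dup_decomp hnd
      obtain ⟨m, hm1, hm2⟩ := walkL_append.mp h
      obtain ⟨ha, hcase2⟩ := hm2
      obtain ⟨m0, hl₁, hmid⟩ := walkL_append.mp hm1
      obtain ⟨_, hcase1⟩ := hmid
      have hlen2 : l₁.length + l₃.length + 2 ≤ n + 1 := by
        simp only [List.length_append, List.length_cons] at hlen
        omega
      rcases hcase1 with ⟨h1, _⟩ | ⟨h1, _⟩ <;> rcases hcase2 with ⟨h3, h4⟩ | ⟨h3, h4⟩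
      · refine ih (l₁ ++ a :: l₃) x y (by simp only [List.length_append, List.length_cons]; omega)
          (walkL_append.mpr ⟨m0, hl₁, ha, Or.inl ⟨h1, h4⟩⟩)
      · refine ih (l₁ ++ l₃) x y (by simp only [List.length_append]; omega)
          (walkL_append.mpr ⟨m0, hl₁, ?_⟩)
        rw [h1] at h4
        exact h4
      · refine ih (l₁ ++ l₃) x y (by simp only [List.length_append]; omega)
          (walkL_append.mpr ⟨m0, hl₁, ?_⟩)
        rw [h1] at h4
        exact h4
      · refine ih (l₁ ++ a :: l₃) x y (by simp only [List.length_append, List.length_cons]; omega)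
          (walkL_append.mpr ⟨m0, hl₁, ha, Or.inr ⟨h1, h4⟩⟩)

lemma conn_nodup_walk {x y : G.V} (h : G.Conn F x y) :
    ∃ l, l.Nodup ∧ G.WalkL F x l y := by
  obtain ⟨l, hl⟩ := conn_walkL h
  exact walkL_nodup_aux l.length l x y (le_refl _) hl

lemma conn_avoid_pendant_aux {p : G.E} {t : G.V}
    (hsrc : ∀ e, G.src e ≠ t) (htgt : ∀ e, G.tgt e = t → e = p) (hp : G.tgt p = t) :
    ∀ (n : ℕ) (l : List G.E) (x y : G.V), l.length ≤ n → x ≠ t → y ≠ t →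
      G.WalkL Set.univ x l y → G.Conn (Set.univ \ {p}) x y := by
  intro n
  induction n with
  | zero =>
    intro l x y hlen _ _ h
    rw [Nat.le_zero, List.length_eq_zero_iff] at hlen
    subst hlen
    exact h ▸ conn_refl _ _
  | succ n ih =>
    intro l x y hlen hx hy h
    match l, h with
    | [], h => exact h ▸ conn_refl _ _
    | e :: tl, ⟨he, hcase⟩ =>
      by_cases hep : e = p
      · subst hep
        rcases hcase with ⟨h1, h2⟩ | ⟨h1, h2⟩
        · -- we stepped from x = src e down to the leaf t = tgt e
          match tl, h2 with
          | [], h2 => exact absurd (h2 ▸ hp) hy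
          | e₂ :: tl₂, ⟨_, hcase₂⟩ =>
            rcases hcase₂ with ⟨h3, _⟩ | ⟨h3, h4⟩
            · exact absurd (h3.trans hp) (hsrc e₂)
            · have he₂ : e₂ = e := htgt e₂ (h3.trans hp)
              subst he₂
              refine ih tl₂ x y ?_ hx hy (h1 ▸ h4)
              simp only [List.length_cons] at hlen ⊢
              omega
        · exact absurd (h1 ▸ hp) hx
      · rcases hcase with ⟨h1, h2⟩ | ⟨h1, h2⟩
        · have hne : G.tgt e ≠ t := fun hh => hep (htgt e hh)
          have hlen' : tl.length ≤ n := by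
            simp only [List.length_cons] at hlen; omega
          have := ih tl (G.tgt e) y hlen' hne hy h2
          exact Relation.ReflTransGen.head ⟨e, ⟨Set.mem_univ e, hep⟩, Or.inl ⟨h1, rfl⟩⟩ this
        · have hlen' : tl.length ≤ n := by
            simp only [List.length_cons] at hlen; omega
          have := ih tl (G.src e) y hlen' (hsrc e) hy h2
          exact Relation.ReflTransGen.head ⟨e, ⟨Set.mem_univ e, hep⟩, Or.inr ⟨rfl, h1⟩⟩ this

/-- Walks avoiding the unique pendant edge at a leaf `t`. -/
lemma conn_avoid_pendant {p : G.E} {t : G.V}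
    (hsrc : ∀ e, G.src e ≠ t) (htgt : ∀ e, G.tgt e = t → e = p) (hp : G.tgt p = t)
    {x y : G.V} (hx : x ≠ t) (hy : y ≠ t) (h : G.Conn Set.univ x y) :
    G.Conn (Set.univ \ {p}) x y := by
  obtain ⟨l, hl⟩ := conn_walkL h
  exact conn_avoid_pendant_aux hsrc htgt hp l.length l x y (le_refl _) hx hy hl

end walklist

section blobs

lemma not_incidentCut_of_nmem {H B : Subgraph G} {e : G.E}
    (hs : G.src e ∉ B.verts) (ht : G.tgt e ∉ B.verts) : ¬ IncidentCut H B e := by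
  rintro ⟨_, ⟨h, _⟩ | ⟨h, _⟩⟩
  exacts [hs h, ht h]

lemma not_incidentCut_of_mem {H B : Subgraph G} {e : G.E}
    (hs : G.src e ∈ B.verts) (ht : G.tgt e ∈ B.verts) : ¬ IncidentCut H B e := by
  rintro ⟨_, ⟨_, h⟩ | ⟨_, h⟩⟩
  exacts [h ht, h hs]

/-- The union of two subgraphs. -/
def Subgraph.union (H K : Subgraph G) : Subgraph G where
  verts := H.verts ∪ K.verts
  edges := H.edges ∪ K.edges
  src_mem := by rintro e (h | h); exacts [Or.inl (H.src_mem e h), Or.inr (K.src_mem e h)]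
  tgt_mem := by rintro e (h | h); exacts [Or.inl (H.tgt_mem e h), Or.inr (K.tgt_mem e h)]

/-- Two blobs sharing a node have the same nodes. -/
lemma blob_verts_eq_of_shared {B₁ B₂ : Subgraph G}
    (h₁ : IsBlobIn (top G) B₁) (h₂ : IsBlobIn (top G) B₂)
    (hsh : (B₁.verts ∩ B₂.verts).Nonempty) : B₁.verts = B₂.verts := by
  obtain ⟨w, hw1, hw2⟩ := hsh
  have key : ∀ f : G.E, ∀ u ∈ (B₁.union B₂).verts,
      G.Conn ((B₁.union B₂).edges \ {f}) u w := by
    rintro f u (hu | hu)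
    · exact (conn_del_of_not_cut h₁.2.1 f (h₁.2.2.1 f) hu hw1).mono
        (Set.diff_subset_diff_left Set.subset_union_left)
    · exact (conn_del_of_not_cut h₂.2.1 f (h₂.2.2.1 f) hu hw2).mono
        (Set.diff_subset_diff_left Set.subset_union_right)
  have hne : (B₁.union B₂).verts.Nonempty := ⟨w, Or.inl hw1⟩
  have hUc : (B₁.union B₂).IsConnected := by
    refine ⟨hne, fun u hu v hv => ?_⟩
    by_cases hE : ∃ f : G.E, True
    · obtain ⟨f, _⟩ := hE
      exact ((key f u hu).trans (key f v hv).symm).mono Set.diff_subset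
    · rcases hu with hu | hu
      · rcases hv with hv | hv
        · exact (h₁.2.1.2 u hu v hv).mono Set.subset_union_left
        · exact ((h₁.2.1.2 u hu w hw1).mono Set.subset_union_left).trans
            ((h₂.2.1.2 v hv w hw2).mono Set.subset_union_right).symm
      · rcases hv with hv | hv
        · exact ((h₂.2.1.2 u hu w hw2).mono Set.subset_union_right).trans
            ((h₁.2.1.2 v hv w hw1).mono Set.subset_union_left).symm
        · exact (h₂.2.1.2 u hu v hv).mono Set.subset_union_right
  have hUnc : ∀ f, ¬ (B₁.union B₂).IsCutEdge f := fun f =>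
    not_cut_of_del_conn hne fun u hu v hv => (key f u hu).trans (key f v hv).symm
  have htople : (B₁.union B₂).le (top G) := ⟨Set.subset_univ _, Set.subset_univ _⟩
  have hle₁ := h₁.2.2.2 (B₁.union B₂) htople hUc hUnc
    ⟨Set.subset_union_left, Set.subset_union_left⟩
  have hle₂ := h₂.2.2.2 (B₁.union B₂) htople hUc hUnc
    ⟨Set.subset_union_right, Set.subset_union_right⟩
  exact Set.Subset.antisymm (Set.subset_union_left.trans hle₂.1)
    (Set.subset_union_right.trans hle₁.1)

/-- Lemma A: if two disjoint connected subgraphs are given, any node separated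
from `B₂` by the incident cut edges of `B₁` is connected to `B₁` avoiding the
incident cut edges of `B₂`. -/
lemma conn_to_other_blob {B₁ B₂ : Subgraph G}
    (h₁c : B₁.IsConnected) (h₂c : B₂.IsConnected)
    (hdisj : ∀ z, z ∈ B₁.verts → z ∉ B₂.verts)
    (hGconn : ∀ u v : G.V, G.Conn Set.univ u v)
    {u v₂ : G.V} (hu : u ∈ B₁.verts) (hv₂ : v₂ ∈ B₂.verts) (x : G.V)
    (hx : ¬ G.Conn {e | ¬ IncidentCut (top G) B₁ e} x v₂) :
    G.Conn {e | ¬ IncidentCut (top G) B₂ e} x u := by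
  have hB₂F₁ : B₂.edges ⊆ {e | ¬ IncidentCut (top G) B₁ e} := fun e he =>
    not_incidentCut_of_nmem (fun h => hdisj _ h (B₂.src_mem e he))
      (fun h => hdisj _ h (B₂.tgt_mem e he))
  have hB₁F₂ : B₁.edges ⊆ {e | ¬ IncidentCut (top G) B₂ e} := fun e he =>
    not_incidentCut_of_nmem (hdisj _ (B₁.src_mem e he)) (hdisj _ (B₁.tgt_mem e he))
  have h := hGconn x u
  revert hx
  induction h using Relation.ReflTransGen.head_induction_on with
  | refl => exact fun _ => conn_refl _ _
  | @head a c step rest ih =>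
    intro ha
    have haB₂ : a ∉ B₂.verts := fun h =>
      ha ((h₂c.2 a h v₂ hv₂).mono hB₂F₁)
    by_cases haB₁ : a ∈ B₁.verts
    · exact (h₁c.2 a haB₁ u hu).mono hB₁F₂
    · obtain ⟨e, _, hcase⟩ := step
      have hends : (G.src e = a ∧ G.tgt e = c) ∨ (G.src e = c ∧ G.tgt e = a) := hcase
      by_cases hcB₁ : c ∈ B₁.verts
      · have h2 : G.Conn {e | ¬ IncidentCut (top G) B₂ e} c u :=
          (h₁c.2 c hcB₁ u hu).mono hB₁F₂
        have hcB₂ : c ∉ B₂.verts := hdisj c hcB₁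
        have he₂ : ¬ IncidentCut (top G) B₂ e := by
          rcases hends with ⟨h1, h2'⟩ | ⟨h1, h2'⟩
          · exact not_incidentCut_of_nmem (h1 ▸ haB₂) (h2' ▸ hcB₂)
          · exact not_incidentCut_of_nmem (h1 ▸ hcB₂) (h2' ▸ haB₂)
        exact Relation.ReflTransGen.head ⟨e, he₂, hcase⟩ h2
      · have he₁ : e ∈ {e | ¬ IncidentCut (top G) B₁ e} := by
          rcases hends with ⟨h1, h2'⟩ | ⟨h1, h2'⟩
          · exact not_incidentCut_of_nmem (h1 ▸ haB₁) (h2' ▸ hcB₁)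
          · exact not_incidentCut_of_nmem (h1 ▸ hcB₁) (h2' ▸ haB₁)
        have hc : ¬ G.Conn {e | ¬ IncidentCut (top G) B₁ e} c v₂ := fun h =>
          ha (Relation.ReflTransGen.head ⟨e, he₁, hcase⟩ h)
        by_cases hcB₂ : c ∈ B₂.verts
        · exact absurd ((h₂c.2 c hcB₂ v₂ hv₂).mono hB₂F₁) hc
        · have he₂ : e ∈ {e | ¬ IncidentCut (top G) B₂ e} := by
            rcases hends with ⟨h1, h2'⟩ | ⟨h1, h2'⟩
            · exact not_incidentCut_of_nmem (h1 ▸ haB₂) (h2' ▸ hcB₂)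
            · exact not_incidentCut_of_nmem (h1 ▸ hcB₂) (h2' ▸ haB₂)
          exact Relation.ReflTransGen.head ⟨e, he₂, hcase⟩ (ih hc)

/-- Two blobs both of which separate three nodes pairwise have the same nodes. -/
lemma blob_verts_eq {B₁ B₂ : Subgraph G}
    (h₁ : IsBlobIn (top G) B₁) (h₂ : IsBlobIn (top G) B₂)
    (hGconn : ∀ u v : G.V, G.Conn Set.univ u v) {p q r : G.V}
    (h1pq : ¬ G.Conn {e | ¬ IncidentCut (top G) B₁ e} p q)
    (h1pr : ¬ G.Conn {e | ¬ IncidentCut (top G) B₁ e} p r)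
    (h1qr : ¬ G.Conn {e | ¬ IncidentCut (top G) B₁ e} q r)
    (h2pq : ¬ G.Conn {e | ¬ IncidentCut (top G) B₂ e} p q)
    (h2pr : ¬ G.Conn {e | ¬ IncidentCut (top G) B₂ e} p r)
    (h2qr : ¬ G.Conn {e | ¬ IncidentCut (top G) B₂ e} q r) :
    B₁.verts = B₂.verts := by
  by_cases hsh : (B₁.verts ∩ B₂.verts).Nonempty
  · exact blob_verts_eq_of_shared h₁ h₂ hsh
  · exfalso
    have hdisj : ∀ z, z ∈ B₁.verts → z ∉ B₂.verts := fun z hz1 hz2 => hsh ⟨z, hz1, hz2⟩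
    obtain ⟨u, hu⟩ := h₁.2.1.1
    obtain ⟨v₂, hv₂⟩ := h₂.2.1.1
    set F₁ := {e | ¬ IncidentCut (top G) B₁ e}
    have key : ∀ s t : G.V, ¬ G.Conn F₁ s v₂ → ¬ G.Conn F₁ t v₂ →
        ¬ G.Conn {e | ¬ IncidentCut (top G) B₂ e} s t → False := by
      intro s t hs ht hst
      exact hst ((conn_to_other_blob h₁.2.1 h₂.2.1 hdisj hGconn hu hv₂ s hs).trans
        (conn_to_other_blob h₁.2.1 h₂.2.1 hdisj hGconn hu hv₂ t ht).symm)
    by_cases hp : G.Conn F₁ p v₂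
    · have hq : ¬ G.Conn F₁ q v₂ := fun h => h1pq (hp.trans h.symm)
      have hr : ¬ G.Conn F₁ r v₂ := fun h => h1pr (hp.trans h.symm)
      exact key q r hq hr h2qr
    · by_cases hq : G.Conn F₁ q v₂
      · have hr : ¬ G.Conn F₁ r v₂ := fun h => h1qr (hq.trans h.symm)
        exact key p r hp hr h2pr
      · exact key p q hp hq h2pq

/-- Every edge with exactly one endpoint in a blob is a cut edge. -/
lemma edge_leaving_blob_cut (hGconn : ∀ u v : G.V, G.Conn Set.univ u v)
    {B : Subgraph G} (hB : IsBlobIn (top G) B) {g : G.E}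
    (hxor : Xor' (G.src g ∈ B.verts) (G.tgt g ∈ B.verts)) :
    (top G).IsCutEdge g := by
  by_contra hnc
  have htopc : (top G).IsConnected := ⟨⟨G.src g, trivial⟩, fun u _ v _ => hGconn u v⟩
  have h1 : G.Conn (Set.univ \ {g}) (G.src g) (G.tgt g) :=
    conn_del_of_not_cut htopc g hnc trivial trivial
  obtain ⟨p, q, hpB, hqB, hor⟩ : ∃ p q, p ∈ B.verts ∧ q ∉ B.verts ∧
      ((G.src g = p ∧ G.tgt g = q) ∨ (G.src g = q ∧ G.tgt g = p)) := by
    rcases hxor with ⟨hs, ht⟩ | ⟨ht, hs⟩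
    · exact ⟨G.src g, G.tgt g, hs, ht, Or.inl ⟨rfl, rfl⟩⟩
    · exact ⟨G.tgt g, G.src g, ht, hs, Or.inr ⟨rfl, rfl⟩⟩
  have hqp : G.Conn (Set.univ \ {g}) q p := by
    rcases hor with ⟨h2, h3⟩ | ⟨h2, h3⟩
    · exact (h2 ▸ h3 ▸ h1).symm
    · exact h2 ▸ h3 ▸ h1
  obtain ⟨l, hnd, hl⟩ := conn_nodup_walk hqp
  have hlg : ∀ e ∈ l, e ≠ g := fun e he => (walkL_mem hl e he).2
  have hgB : g ∉ B.edges := by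
    intro h
    rcases hor with ⟨_, h2⟩ | ⟨h2, _⟩
    · exact hqB (h2 ▸ B.tgt_mem g h)
    · exact hqB (h2 ▸ B.src_mem g h)
  have hsrcm : ∀ e ∈ B.edges ∪ ({g} ∪ {e | e ∈ l}),
      G.src e ∈ B.verts ∪ {v | G.Conn {e | e ∈ l} q v} := by
    rintro e (he | he | he)
    · exact Or.inl (B.src_mem e he)
    · rcases Set.mem_singleton_iff.mp he with rfl
      rcases hor with ⟨h2, _⟩ | ⟨h2, _⟩
      · exact Or.inl (by rw [h2]; exact hpB)
      · exact Or.inr (by rw [h2]; exact conn_refl _ _)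
    · exact Or.inr ((walkL_reach hl e he).1)
  have htgtm : ∀ e ∈ B.edges ∪ ({g} ∪ {e | e ∈ l}),
      G.tgt e ∈ B.verts ∪ {v | G.Conn {e | e ∈ l} q v} := by
    rintro e (he | he | he)
    · exact Or.inl (B.tgt_mem e he)
    · rcases Set.mem_singleton_iff.mp he with rfl
      rcases hor with ⟨_, h2⟩ | ⟨_, h2⟩
      · exact Or.inr (by rw [h2]; exact conn_refl _ _)
      · exact Or.inl (by rw [h2]; exact hpB)
    · exact Or.inr ((walkL_reach hl e he).2)
  set Bp : Subgraph G := ⟨B.verts ∪ {v | G.Conn {e | e ∈ l} q v},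
    B.edges ∪ ({g} ∪ {e | e ∈ l}), hsrcm, htgtm⟩ with hBp
  have hRsub : {e | e ∈ l} ⊆ Bp.edges := fun e he => Or.inr (Or.inr he)
  have hBsub : B.edges ⊆ Bp.edges := fun e he => Or.inl he
  have key : ∀ f' : G.E, ∀ x ∈ Bp.verts, G.Conn (Bp.edges \ {f'}) x p := by
    intro f' x hx
    have hq2p : G.Conn (Bp.edges \ {f'}) q p := by
      by_cases hf'g : f' = g
      · subst hf'g
        refine (walkL_conn (walkL_self hl)).mono ?_
        intro e he
        exact ⟨hRsub he, hlg e he⟩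
      · have hmem : g ∈ Bp.edges \ {f'} :=
          ⟨Or.inr (Or.inl rfl), fun h => hf'g (Set.mem_singleton_iff.mp h).symm⟩
        have hstep : G.Step (Bp.edges \ {f'}) q p := by
          rcases hor with ⟨h2, h3⟩ | ⟨h2, h3⟩
          · exact ⟨g, hmem, Or.inr ⟨h2, h3⟩⟩
          · exact ⟨g, hmem, Or.inl ⟨h2, h3⟩⟩
        exact Relation.ReflTransGen.single hstep
    have hBpart : ∀ z ∈ B.verts, G.Conn (Bp.edges \ {f'}) z p := fun z hz =>
      (conn_del_of_not_cut hB.2.1 f' (hB.2.2.1 f') hz hpB).mono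
        (Set.diff_subset_diff_left hBsub)
    rcases hx with hx | hx
    · exact hBpart x hx
    · -- x is reachable from q through the walk
      by_cases hf'l : f' ∈ l
      · -- split the walk at f'
        obtain ⟨l₁, l₂, rfl⟩ := List.append_of_mem hf'l
        have hnd₁ : f' ∉ l₁ ∧ f' ∉ l₂ := by
          rw [List.nodup_append] at hnd
          refine ⟨fun h => ?_, (List.nodup_cons.mp hnd.2.1).1⟩
          exact hnd.2.2 f' h f' List.mem_cons_self rfl
        obtain ⟨m, hm1, hm2⟩ := walkL_append.mp hl
        have hl₁sub : {e | e ∈ l₁} ⊆ Bp.edges \ {f'} := fun e he =>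
          ⟨hRsub (List.mem_append_left _ he), fun h => hnd₁.1 (h ▸ he)⟩
        have hl₂sub : {e | e ∈ l₂} ⊆ Bp.edges \ {f'} := fun e he =>
          ⟨hRsub (List.mem_append_right _ (List.mem_cons_of_mem f' he)),
            fun h => hnd₁.2 (h ▸ he)⟩
        have hqm : G.Conn (Bp.edges \ {f'}) q m :=
          (walkL_conn (walkL_self hm1)).mono hl₁sub
        obtain ⟨_, hcase⟩ := hm2
        have hendp : G.Conn (Bp.edges \ {f'}) (G.src f') p ∧
            G.Conn (Bp.edges \ {f'}) (G.tgt f') p := by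
          rcases hcase with ⟨h3, h4⟩ | ⟨h3, h4⟩
          · refine ⟨?_, (walkL_conn (walkL_self h4)).mono hl₂sub⟩
            rw [h3]
            exact hqm.symm.trans hq2p
          · refine ⟨(walkL_conn (walkL_self h4)).mono hl₂sub, ?_⟩
            rw [h3]
            exact hqm.symm.trans hq2p
        have hsub2 : {e | e ∈ l₁ ++ f' :: l₂} \ {f'} ⊆ Bp.edges \ {f'} := fun e he =>
          ⟨hRsub he.1, he.2⟩
        rcases conn_decomp hx with hc | ⟨hc1, hc2⟩ | ⟨hc1, hc2⟩
        · exact (hc.mono hsub2).symm.trans hq2p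
        · exact (hc2.mono hsub2).symm.trans hendp.2
        · exact (hc2.mono hsub2).symm.trans hendp.1
      · have : {e | e ∈ l} ⊆ Bp.edges \ {f'} := fun e he =>
          ⟨hRsub he, fun h => hf'l (h ▸ he)⟩
        exact (hx.mono this).symm.trans hq2p
    done
  have hne : Bp.verts.Nonempty := ⟨p, Or.inl hpB⟩
  have hBpc : Bp.IsConnected := by
    refine ⟨hne, fun u hu v hv => ?_⟩
    exact ((key g u hu).trans (key g v hv).symm).mono Set.diff_subset
  have hBpnc : ∀ f', ¬ Bp.IsCutEdge f' := fun f' =>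
    not_cut_of_del_conn hne fun u hu v hv => (key f' u hu).trans (key f' v hv).symm
  have hle := hB.2.2.2 Bp ⟨Set.subset_univ _, Set.subset_univ _⟩ hBpc hBpnc
    ⟨Set.subset_union_left, Set.subset_union_left⟩
  exact hqB (hle.1 (Or.inr (conn_refl _ q)))

end blobs

section bridges

/-- Deleting a bridge whose sides both contain `x, y` keeps them connected. -/
lemma conn_del_bridge {E'' E : Set G.E} {g : G.E} {x y : G.V} (hsub : E'' ⊆ E)
    (hbr : ¬ G.Conn (E \ {g}) (G.src g) (G.tgt g))
    (hxy : G.Conn (E \ {g}) x y) (h : G.Conn E'' x y) : G.Conn (E'' \ {g}) x y := by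
  have hsub' : E'' \ {g} ⊆ E \ {g} := Set.diff_subset_diff_left hsub
  rcases conn_decomp h with hc | ⟨hc1, hc2⟩ | ⟨hc1, hc2⟩
  · exact hc
  · exact absurd (((hc1.mono hsub').symm.trans hxy).trans (hc2.mono hsub').symm) hbr
  · exact absurd ((((hc1.mono hsub').symm.trans hxy).trans (hc2.mono hsub').symm).symm) hbr

/-- Deleting a set of bridges, none of which separates `x` from `y`. -/
lemma conn_del_set {E : Set G.E} {x y : G.V} (S : Set G.E)
    (hS : ∀ g ∈ S, ¬ G.Conn (E \ {g}) (G.src g) (G.tgt g) ∧ G.Conn (E \ {g}) x y)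
    (h : G.Conn E x y) : G.Conn (E \ S) x y := by
  have hfin : S.Finite := Set.toFinite S
  revert hS
  refine Set.Finite.induction_on (motive := fun S _ =>
    (∀ g ∈ S, ¬ G.Conn (E \ {g}) (G.src g) (G.tgt g) ∧ G.Conn (E \ {g}) x y) →
      G.Conn (E \ S) x y) S hfin (fun _ => by simpa using h) ?_
  intro a S' _ _ ih hins
  have hrest := ih fun g hg => hins g (Set.mem_insert_of_mem a hg)
  have := conn_del_bridge (g := a) Set.diff_subset (hins a (Set.mem_insert a S')).1
    (hins a (Set.mem_insert a S')).2 hrest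
  rwa [Set.diff_diff, Set.union_singleton] at this

end bridges

end MDigraph

namespace PhyloNetwork

open MDigraph

variable {X : Type} (N : PhyloNetwork X)

/-- Well-foundedness of the parent relation. -/
lemma wf_parent : WellFounded (fun z v : N.toMDigraph.V => N.toMDigraph.DStep Set.univ z v) := by
  have hwf : WellFounded (fun z v : N.toMDigraph.V =>
      Relation.TransGen (N.toMDigraph.DStep Set.univ) z v) := by
    letI : IsTrans N.toMDigraph.V
        (fun z v => Relation.TransGen (N.toMDigraph.DStep Set.univ) z v) :=
      ⟨fun _ _ _ h h' => h.trans h'⟩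
    letI : IsIrrefl N.toMDigraph.V
        (fun z v => Relation.TransGen (N.toMDigraph.DStep Set.univ) z v) :=
      ⟨fun v h => N.acyclic v h⟩
    exact Finite.wellFounded_of_trans_of_irrefl _
  exact Subrelation.wf (fun h => Relation.TransGen.single h) hwf

/-- Well-foundedness of the child relation. -/
lemma wf_child : WellFounded (fun z v : N.toMDigraph.V => N.toMDigraph.DStep Set.univ v z) := by
  have hwf : WellFounded (fun z v : N.toMDigraph.V =>
      Relation.TransGen (N.toMDigraph.DStep Set.univ) v z) := by
    letI : IsTrans N.toMDigraph.V
        (fun z v => Relation.TransGen (N.toMDigraph.DStep Set.univ) v z) :=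
      ⟨fun _ _ _ h h' => h'.trans h⟩
    letI : IsIrrefl N.toMDigraph.V
        (fun z v => Relation.TransGen (N.toMDigraph.DStep Set.univ) v z) :=
      ⟨fun v h => N.acyclic v h⟩
    exact Finite.wellFounded_of_trans_of_irrefl _
  exact Subrelation.wf (fun h => Relation.TransGen.single h) hwf

/-- The root reaches every node. -/
lemma root_reaches (v : N.toMDigraph.V) : N.toMDigraph.DConn Set.univ N.root v := by
  refine (wf_parent N).induction v ?_
  intro x ih
  by_cases hx : x = N.root
  · exact hx ▸ Relation.ReflTransGen.refl
  · have hpos : 0 < Nat.card {e : N.toMDigraph.E // N.toMDigraph.tgt e = x} := by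
      by_cases hleaf : ∃ t, x = N.leaf t
      · obtain ⟨t, rfl⟩ := hleaf
        have := N.leaf_in t
        unfold MDigraph.inDeg at this
        omega
      · rcases N.internal x hx (fun t h => hleaf ⟨t, h⟩) with ⟨h1, _⟩ | ⟨h1, _⟩ <;>
          (unfold MDigraph.inDeg at h1; omega)
    obtain ⟨⟨e, he⟩⟩ := (Nat.card_pos_iff.mp hpos).1
    have hstep : N.toMDigraph.DStep Set.univ (N.toMDigraph.src e) x :=
      ⟨e, Set.mem_univ e, rfl, he⟩
    exact (ih _ hstep).tail hstep

/-- Every node is above some leaf. -/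
lemma reaches_leaf (v : N.toMDigraph.V) : ∃ t, N.toMDigraph.Above v (N.leaf t) := by
  refine (wf_child N).induction
    (C := fun v => ∃ t, N.toMDigraph.Above v (N.leaf t)) v ?_
  intro x ih
  by_cases hleaf : ∃ t, x = N.leaf t
  · obtain ⟨t, rfl⟩ := hleaf
    exact ⟨t, Relation.ReflTransGen.refl⟩
  · have hpos : 0 < Nat.card {e : N.toMDigraph.E // N.toMDigraph.src e = x} := by
      by_cases hx : x = N.root
      · have := N.root_out
        unfold MDigraph.outDeg at this
        rw [hx]
        omega
      · rcases N.internal x hx (fun t h => hleaf ⟨t, h⟩) with ⟨_, h1⟩ | ⟨_, h1⟩ <;>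
          (unfold MDigraph.outDeg at h1; omega)
    obtain ⟨⟨e, he⟩⟩ := (Nat.card_pos_iff.mp hpos).1
    have hstep : N.toMDigraph.DStep Set.univ x (N.toMDigraph.tgt e) :=
      ⟨e, Set.mem_univ e, he, rfl⟩
    obtain ⟨t, ht⟩ := ih _ hstep
    exact ⟨t, Relation.ReflTransGen.head hstep ht⟩

/-- Leaves have no outgoing edges. -/
lemma no_src_leaf (t : X) : ∀ e, N.toMDigraph.src e ≠ N.leaf t := by
  intro e he
  have := N.leaf_out t
  unfold MDigraph.outDeg at this
  rw [Nat.card_eq_zero] at this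
  rcases this with h | h
  · exact h.elim' ⟨e, he⟩
  · exact h.not_finite (Subtype.finite)

/-- The unique incoming edge at a leaf. -/
lemma in_edge_unique (t : X) {e e' : N.toMDigraph.E}
    (h : N.toMDigraph.tgt e = N.leaf t) (h' : N.toMDigraph.tgt e' = N.leaf t) : e = e' := by
  have h1 := N.leaf_in t
  unfold MDigraph.inDeg at h1
  have := (Nat.card_eq_one_iff_unique.mp h1).1
  exact congrArg Subtype.val (this.allEq ⟨e, h⟩ ⟨e', h'⟩)

lemma in_edge_exists (t : X) : ∃ p, N.toMDigraph.tgt p = N.leaf t := by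
  have h1 := N.leaf_in t
  unfold MDigraph.inDeg at h1
  obtain ⟨⟨p, hp⟩⟩ := (Nat.card_eq_one_iff_unique.mp h1).2
  exact ⟨p, hp⟩

/-- A leaf cannot belong to a blob separating two other leaves. -/
lemma leaf_not_in_blob {B : Subgraph N.toMDigraph} (hB : IsBlobIn (top N.toMDigraph) B)
    {t s s' : X} (hst : N.leaf s ≠ N.leaf t) (hs't : N.leaf s' ≠ N.leaf t)
    (hdet : ¬ N.toMDigraph.Conn {e | ¬ IncidentCut (top N.toMDigraph) B e}
      (N.leaf s) (N.leaf s')) :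
    N.leaf t ∉ B.verts := by
  intro hmem
  obtain ⟨p, hp⟩ := in_edge_exists N t
  have hsingle : ∀ w ∈ B.verts, w = N.leaf t := by
    intro w hw
    by_contra hne
    have hconn := hB.2.1.2 (N.leaf t) hmem w hw
    rcases Relation.ReflTransGen.cases_head hconn with heq | ⟨c, hstep, _⟩
    · exact hne heq.symm
    · obtain ⟨e, he, hcase⟩ := hstep
      have hep : e = p := by
        rcases hcase with ⟨h1, _⟩ | ⟨_, h2⟩
        · exact absurd h1 (no_src_leaf N t e)
        · exact in_edge_unique N t h2 hp
      subst hep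
      -- p is then a cut edge of B, contradiction
      refine hB.2.2.1 e ⟨he, ?_⟩
      have h1 : B.numComponents = 1 := by
        unfold Subgraph.numComponents
        refine numComponents_eq_one ⟨N.leaf t, hmem⟩ fun u hu v hv => ?_
        rw [B.edges_restrict]
        exact hB.2.1.2 u hu v hv
      have h2 : 2 ≤ (B.deleteEdge e).numComponents := by
        unfold Subgraph.numComponents Subgraph.deleteEdge
        refine two_le_numComponents hmem hw ?_
        rw [show {e' ∈ B.edges \ {e} | N.toMDigraph.src e' ∈ B.verts ∧
            N.toMDigraph.tgt e' ∈ B.verts} = B.edges \ {e} from B.edges_del_restrict e]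
        intro hcc
        rcases Relation.ReflTransGen.cases_head hcc with heq | ⟨c, hstep', _⟩
        · exact hne heq.symm
        · obtain ⟨e', ⟨_, he'p⟩, hcase'⟩ := hstep'
          rcases hcase' with ⟨h1', _⟩ | ⟨_, h2'⟩
          · exact no_src_leaf N t e' h1'
          · exact he'p (Set.mem_singleton_iff.mpr (in_edge_unique N t h2' hp))
      omega
  have hinc : ∀ e, IncidentCut (top N.toMDigraph) B e → e = p := by
    rintro e ⟨_, ⟨hs, _⟩ | ⟨ht, _⟩⟩
    · exact absurd (hsingle _ hs) (no_src_leaf N t e)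
    · exact in_edge_unique N t (hsingle _ ht) hp
  have hconn2 := conn_avoid_pendant (no_src_leaf N t)
    (fun e h => in_edge_unique N t h hp) hp hst hs't (N.conn _ _)
  refine hdet (hconn2.mono ?_)
  intro e he hic
  exact he.2 (hinc e hic)

/-- Nodes of the induced subnetwork are connected inside it (via the root). -/
lemma induced_dconn_root {Y : Set X} {v : N.toMDigraph.V}
    (hv : v ∈ (N.inducedSub Y).verts) :
    N.toMDigraph.DConn (N.inducedSub Y).edges N.root v := by
  obtain ⟨t, ht, habove⟩ := hv
  refine dconn_restrict_inv (I := fun _ => True) (E0 := Set.univ) ?_ N.root trivial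
    (root_reaches N v)
  intro e _ _ hrest
  exact ⟨trivial, ⟨t, ht, Relation.ReflTransGen.trans hrest habove⟩⟩

lemma induced_conn {Y : Set X} {u v : N.toMDigraph.V}
    (hu : u ∈ (N.inducedSub Y).verts) (hv : v ∈ (N.inducedSub Y).verts) :
    N.toMDigraph.Conn (N.inducedSub Y).edges u v :=
  ((induced_dconn_root N hu).toConn).symm.trans (induced_dconn_root N hv).toConn

end PhyloNetwork

section Part2

open PhyloNetwork

variable {X : Type}

/-- Core refutation: if the four leaves sit relative to a unique boundary edge
`fstar` of the region `K` (which contains the leaves of `a` and `z` but not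
those of `p` and `q`), then the rule hypothesis for `(a,p,q,z)` fails. -/
lemma part2core (N : PhyloNetwork X) (a p q z : X)
    (haz : a ≠ z) (hpq : p ≠ q)
    (K : Set N.toMDigraph.V) (fstar : N.toMDigraph.E) (κ β : N.toMDigraph.V)
    (hκK : κ ∈ K) (hβK : β ∉ K)
    (hor : (N.toMDigraph.src fstar = β ∧ N.toMDigraph.tgt fstar = κ) ∨
           (N.toMDigraph.src fstar = κ ∧ N.toMDigraph.tgt fstar = β))
    (hbu : ∀ e, ((N.toMDigraph.src e ∈ K ∧ N.toMDigraph.tgt e ∉ K) ∨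
           (N.toMDigraph.tgt e ∈ K ∧ N.toMDigraph.src e ∉ K)) → e = fstar)
    (hla : N.leaf a ∈ K) (hlz : N.leaf z ∈ K)
    (hlp : N.leaf p ∉ K) (hlq : N.leaf q ∉ K)
    (pk2 : N.toMDigraph.Conn
      {e ∈ (N.inducedSub {a, p, q, z}).edges |
        N.toMDigraph.src e ∈ K ∧ N.toMDigraph.tgt e ∈ K} (N.leaf a) (N.leaf z))
    (pk3 : N.toMDigraph.Conn
      {e ∈ (N.inducedSub {a, p, q, z}).edges |
        N.toMDigraph.src e ∉ K ∧ N.toMDigraph.tgt e ∉ K} (N.leaf p) (N.leaf q))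
    (pk5 : ∀ v ∈ K, v ∈ (N.inducedSub {a, p, q, z}).verts →
      N.toMDigraph.Conn ((N.inducedSub {a, p, q, z}).edges \ {fstar}) v κ)
    (hR : RuleHyp N a p q z) : False := by
  set H' := N.inducedSub {a, p, q, z} with hH'
  have pkCross : ∀ v w, v ∈ K → w ∉ K →
      ¬ N.toMDigraph.Conn (H'.edges \ {fstar}) v w := by
    intro v w hv hw hc
    obtain ⟨e2, he2, hcase⟩ := conn_cross hc hv hw
    exact he2.2 (Set.mem_singleton_iff.mpr (hbu e2 hcase))
  have hS1sub : {e ∈ H'.edges | N.toMDigraph.src e ∈ K ∧ N.toMDigraph.tgt e ∈ K}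
      ⊆ H'.edges \ {fstar} := by
    rintro e ⟨heH, hsK, htK⟩
    refine ⟨heH, fun hh => ?_⟩
    rcases Set.mem_singleton_iff.mp hh with rfl
    rcases hor with ⟨h1, _⟩ | ⟨_, h2⟩
    · exact hβK (h1 ▸ hsK)
    · exact hβK (h2 ▸ htK)
  have hS0sub : {e ∈ H'.edges | N.toMDigraph.src e ∉ K ∧ N.toMDigraph.tgt e ∉ K}
      ⊆ H'.edges \ {fstar} := by
    rintro e ⟨heH, hsK, htK⟩
    refine ⟨heH, fun hh => ?_⟩
    rcases Set.mem_singleton_iff.mp hh with rfl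
    rcases hor with ⟨_, h2⟩ | ⟨h1, _⟩
    · exact htK (h2 ▸ hκK)
    · exact hsK (h1 ▸ hκK)
  have P2 : N.toMDigraph.Conn (H'.edges \ {fstar}) (N.leaf a) (N.leaf z) := pk2.mono hS1sub
  have P3 : N.toMDigraph.Conn (H'.edges \ {fstar}) (N.leaf p) (N.leaf q) := pk3.mono hS0sub
  -- Refutation of the B-quartet disjunct.
  have hBQ : ¬ BQuartetIn H' N.leaf a p q z := by
    rintro ⟨B', hB', hdet'⟩
    have hfB' : fstar ∉ B'.edges := by
      intro hmem
      have h1 := conn_del_of_not_cut hB'.2.1 fstar (hB'.2.2.1 fstar)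
        (B'.src_mem fstar hmem) (B'.tgt_mem fstar hmem)
      have h2 : N.toMDigraph.Conn (H'.edges \ {fstar}) (N.toMDigraph.src fstar)
          (N.toMDigraph.tgt fstar) := h1.mono (Set.diff_subset_diff_left hB'.1.2)
      rcases hor with ⟨h3, h4⟩ | ⟨h3, h4⟩
      · refine pkCross κ β hκK hβK ?_
        rw [h3, h4] at h2
        exact h2.symm
      · refine pkCross κ β hκK hβK ?_
        rw [h3, h4] at h2
        exact h2
    have hB'sub : B'.edges ⊆ H'.edges \ {fstar} := fun e he =>
      ⟨hB'.1.2 he, fun h => hfB' (Set.mem_singleton_iff.mp h ▸ he)⟩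
    obtain ⟨v', hv'⟩ := hB'.2.1.1
    have hdset : {e ∈ H'.edges | ¬ IncidentCut H' B' e}
        = H'.edges \ {e | IncidentCut H' B' e} := rfl
    by_cases hside : N.toMDigraph.Conn (H'.edges \ {fstar}) κ v'
    · -- B' lies on the K-side; contradict the separation of p and q.
      have hinK : ∀ w ∈ B'.verts, w ∈ K := by
        intro w hw
        by_contra hwK
        exact pkCross κ w hκK hwK (hside.trans ((hB'.2.1.2 v' hv' w hw).mono hB'sub))
      have hall : ∀ g ∈ {e | IncidentCut H' B' e},
          ¬ N.toMDigraph.Conn (H'.edges \ {g}) (N.toMDigraph.src g) (N.toMDigraph.tgt g) ∧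
          N.toMDigraph.Conn (H'.edges \ {g}) (N.leaf p) (N.leaf q) := by
        intro g hg
        refine ⟨not_conn_of_isCutEdge hg.1, ?_⟩
        by_cases hgf : g = fstar
        · exact hgf ▸ P3
        · have hz1 : N.toMDigraph.src g ∈ B'.verts ∨ N.toMDigraph.tgt g ∈ B'.verts := by
            rcases hg.2 with ⟨h, _⟩ | ⟨h, _⟩
            exacts [Or.inl h, Or.inr h]
          have hgK : N.toMDigraph.src g ∈ K ∧ N.toMDigraph.tgt g ∈ K := by
            rcases hz1 with h | h
            · have h1 := hinK _ h
              by_cases h2 : N.toMDigraph.tgt g ∈ K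
              · exact ⟨h1, h2⟩
              · exact absurd (hbu g (Or.inl ⟨h1, h2⟩)) hgf
            · have h1 := hinK _ h
              by_cases h2 : N.toMDigraph.src g ∈ K
              · exact ⟨h2, h1⟩
              · exact absurd (hbu g (Or.inr ⟨h1, h2⟩)) hgf
          refine pk3.mono ?_
          rintro e ⟨heH, hs, ht⟩
          refine ⟨heH, fun hh => ?_⟩
          rcases Set.mem_singleton_iff.mp hh with rfl
          exact hs hgK.1
      have hbase : N.toMDigraph.Conn H'.edges (N.leaf p) (N.leaf q) :=
        induced_conn N ⟨p, by simp, Relation.ReflTransGen.refl⟩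
          ⟨q, by simp, Relation.ReflTransGen.refl⟩
      have hfin := conn_del_set _ hall hbase
      exact hdet' p (by simp) q (by simp) hpq (by rw [hdset]; exact hfin)
    · -- B' lies off the K-side; contradict the separation of a and z.
      have hnotK : ∀ w ∈ B'.verts, w ∉ K := by
        intro w hw hwK
        have hwH : w ∈ H'.verts := hB'.1.1 hw
        exact hside ((pk5 w hwK hwH).symm.trans ((hB'.2.1.2 w hw v' hv').mono hB'sub))
      have hall : ∀ g ∈ {e | IncidentCut H' B' e},
          ¬ N.toMDigraph.Conn (H'.edges \ {g}) (N.toMDigraph.src g) (N.toMDigraph.tgt g) ∧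
          N.toMDigraph.Conn (H'.edges \ {g}) (N.leaf a) (N.leaf z) := by
        intro g hg
        refine ⟨not_conn_of_isCutEdge hg.1, ?_⟩
        by_cases hgf : g = fstar
        · exact hgf ▸ P2
        · have hgH : g ∈ H'.edges := hg.1.1
          have hstepg : N.toMDigraph.Conn (H'.edges \ {fstar})
              (N.toMDigraph.src g) (N.toMDigraph.tgt g) :=
            conn_edge ⟨hgH, fun hh => hgf (Set.mem_singleton_iff.mp hh)⟩
          have hgK : N.toMDigraph.src g ∉ K ∧ N.toMDigraph.tgt g ∉ K := by
            have hBnotK : ∀ w ∈ B'.verts, w ∉ K := hnotK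
            have hother : ∀ w, w ∈ K → (w = N.toMDigraph.src g ∨ w = N.toMDigraph.tgt g) →
                False := by
              intro w hwK hwg
              have hwH : w ∈ H'.verts := by
                rcases hwg with rfl | rfl
                exacts [H'.src_mem g hgH, H'.tgt_mem g hgH]
              have hwκ := pk5 w hwK hwH
              have hwB' : N.toMDigraph.Conn (H'.edges \ {fstar}) κ v' := by
                rcases hg.2 with ⟨h, _⟩ | ⟨h, _⟩
                · -- src g ∈ B'
                  have hsv' : N.toMDigraph.Conn (H'.edges \ {fstar})
                      (N.toMDigraph.src g) v' := (hB'.2.1.2 _ h v' hv').mono hB'sub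
                  rcases hwg with rfl | rfl
                  · exact hwκ.symm.trans hsv'
                  · exact hwκ.symm.trans (hstepg.symm.trans hsv')
                · have htv' : N.toMDigraph.Conn (H'.edges \ {fstar})
                      (N.toMDigraph.tgt g) v' := (hB'.2.1.2 _ h v' hv').mono hB'sub
                  rcases hwg with rfl | rfl
                  · exact hwκ.symm.trans (hstepg.trans htv')
                  · exact hwκ.symm.trans htv'
              exact hside hwB'
            constructor
            · intro h; exact hother _ h (Or.inl rfl)
            · intro h; exact hother _ h (Or.inr rfl)
          refine pk2.mono ?_
          rintro e ⟨heH, hs, ht⟩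
          refine ⟨heH, fun hh => ?_⟩
          rcases Set.mem_singleton_iff.mp hh with rfl
          exact hgK.1 hs
      have hbase : N.toMDigraph.Conn H'.edges (N.leaf a) (N.leaf z) :=
        induced_conn N ⟨a, by simp, Relation.ReflTransGen.refl⟩
          ⟨z, by simp, Relation.ReflTransGen.refl⟩
      have hfin := conn_del_set _ hall hbase
      exact hdet' a (by simp) z (by simp) haz (by rw [hdset]; exact hfin)
  -- Refutation of the cut-separation disjuncts.
  have hCS : ∀ p' q' : X, N.leaf p' ∉ K → N.leaf q' ∉ K →
      ¬ CutSep H' N.leaf a p' q' z := by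
    rintro p' q' hp' hq' ⟨f, hf, h1, h2, h3⟩
    by_cases hff : f = fstar
    · exact pkCross _ _ hla hp' (hff ▸ h1)
    · have hmono : (H'.edges \ {f}) \ {fstar} ⊆ H'.edges \ {fstar} := fun e he =>
        ⟨he.1.1, he.2⟩
      have hmono2 : (H'.edges \ {f}) \ {fstar} ⊆ H'.edges \ {f} := Set.diff_subset
      -- decompose the walk from leaf a to leaf p'
      have hβp : N.toMDigraph.Conn ((H'.edges \ {f}) \ {fstar}) β (N.leaf p') := by
        rcases conn_decomp (g := fstar) h1 with hc | ⟨hc1, hc2⟩ | ⟨hc1, hc2⟩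
        · exact absurd (hc.mono hmono) (pkCross _ _ hla hp')
        · rcases hor with ⟨hs, ht⟩ | ⟨hs, ht⟩
          · exact absurd ((hs ▸ hc1 :
              N.toMDigraph.Conn ((H'.edges \ {f}) \ {fstar}) (N.leaf a) β).mono hmono)
              (pkCross _ _ hla hβK)
          · exact ht ▸ hc2
        · rcases hor with ⟨hs, ht⟩ | ⟨hs, ht⟩
          · exact hs ▸ hc2
          · exact absurd ((ht ▸ hc1 :
              N.toMDigraph.Conn ((H'.edges \ {f}) \ {fstar}) (N.leaf a) β).mono hmono)
              (pkCross _ _ hla hβK)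
      have hqβ : N.toMDigraph.Conn ((H'.edges \ {f}) \ {fstar}) (N.leaf q') β := by
        rcases conn_decomp (g := fstar) h2 with hc | ⟨hc1, hc2⟩ | ⟨hc1, hc2⟩
        · exact absurd (hc.mono hmono).symm (pkCross _ _ hlz hq')
        · rcases hor with ⟨hs, ht⟩ | ⟨hs, ht⟩
          · exact hs ▸ hc1
          · exact absurd ((hs ▸ hc1 :
              N.toMDigraph.Conn ((H'.edges \ {f}) \ {fstar}) (N.leaf q') κ).mono hmono).symm
              (pkCross _ _ hκK hq')
        · rcases hor with ⟨hs, ht⟩ | ⟨hs, ht⟩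
          · exact absurd ((ht ▸ hc1 :
              N.toMDigraph.Conn ((H'.edges \ {f}) \ {fstar}) (N.leaf q') κ).mono hmono).symm
              (pkCross _ _ hκK hq')
          · exact ht ▸ hc1
      have hp'q' : N.toMDigraph.Conn (H'.edges \ {f}) (N.leaf p') (N.leaf q') :=
        (hβp.symm.trans hqβ.symm).mono hmono2
      exact h3 (h1.trans hp'q')
  rcases hR with ⟨_, hcs | hcs⟩ | hbq
  · exact hCS p q hlp hlq hcs
  · exact hCS q p hlq hlp hcs
  · exact hBQ hbq

/-- If leaves `a` and `z` remain connected off the incident cut edges of a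
blob `B` separating the other pairs, then the rule hypothesis for
`(a,p,q,z)` fails. -/
lemma part2 (N : PhyloNetwork X) {B : Subgraph N.toMDigraph}
    (hB : IsBlobIn (top N.toMDigraph) B)
    {a p q z : X} (haz : a ≠ z) (hpq : p ≠ q)
    (hlaB : N.leaf a ∉ B.verts)
    (hnp : ¬ N.toMDigraph.Conn {e | ¬ IncidentCut (top N.toMDigraph) B e}
      (N.leaf a) (N.leaf p))
    (hnq : ¬ N.toMDigraph.Conn {e | ¬ IncidentCut (top N.toMDigraph) B e}
      (N.leaf a) (N.leaf q))
    (hW : N.toMDigraph.Conn {e | ¬ IncidentCut (top N.toMDigraph) B e}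
      (N.leaf a) (N.leaf z))
    (hR : RuleHyp N a p q z) : False := by
  set F : Set N.toMDigraph.E := {e | ¬ IncidentCut (top N.toMDigraph) B e} with hF
  set K : Set N.toMDigraph.V := {v | N.toMDigraph.Conn F (N.leaf a) v} with hKdef
  have hKla : N.leaf a ∈ K := conn_refl _ _
  have hKlz : N.leaf z ∈ K := hW
  have hKlp : N.leaf p ∉ K := hnp
  have hKlq : N.leaf q ∉ K := hnq
  have hKmem : ∀ {v w}, v ∈ K → N.toMDigraph.Conn F v w → w ∈ K := fun hv hc => hv.trans hc
  have hKB : ∀ v ∈ K, v ∉ B.verts := by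
    intro v hv hvB
    obtain ⟨e2, he2F, hcase⟩ := conn_cross (A := B.verts) (hv : _).symm hvB hlaB
    have hxor : Xor' (N.toMDigraph.src e2 ∈ B.verts) (N.toMDigraph.tgt e2 ∈ B.verts) := by
      rcases hcase with ⟨h1, h2⟩ | ⟨h1, h2⟩
      exacts [Or.inl ⟨h1, h2⟩, Or.inr ⟨h1, h2⟩]
    exact he2F ⟨edge_leaving_blob_cut N.conn hB hxor, hxor⟩
  -- boundary edges of K
  have hbdry_not_F : ∀ e, ((N.toMDigraph.src e ∈ K ∧ N.toMDigraph.tgt e ∉ K) ∨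
      (N.toMDigraph.tgt e ∈ K ∧ N.toMDigraph.src e ∉ K)) → e ∉ F := by
    rintro e (⟨h1, h2⟩ | ⟨h1, h2⟩) heF
    · exact h2 (hKmem h1 (conn_edge heF))
    · exact h2 (hKmem h1 (conn_edge heF).symm)
  have hbdry_inc : ∀ e, ((N.toMDigraph.src e ∈ K ∧ N.toMDigraph.tgt e ∉ K) ∨
      (N.toMDigraph.tgt e ∈ K ∧ N.toMDigraph.src e ∉ K)) →
      IncidentCut (top N.toMDigraph) B e := fun e h => not_not.mp (hbdry_not_F e h)
  have hpts : ∀ e, ((N.toMDigraph.src e ∈ K ∧ N.toMDigraph.tgt e ∉ K) ∨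
      (N.toMDigraph.tgt e ∈ K ∧ N.toMDigraph.src e ∉ K)) →
      ∃ ke be, ke ∈ K ∧ be ∈ B.verts ∧
        ((N.toMDigraph.src e = ke ∧ N.toMDigraph.tgt e = be) ∨
         (N.toMDigraph.src e = be ∧ N.toMDigraph.tgt e = ke)) := by
    intro e h
    have hxor := (hbdry_inc e h).2
    rcases h with ⟨h1, h2⟩ | ⟨h1, h2⟩
    · refine ⟨N.toMDigraph.src e, N.toMDigraph.tgt e, h1, ?_, Or.inl ⟨rfl, rfl⟩⟩
      rcases hxor with ⟨hs, _⟩ | ⟨ht, _⟩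
      · exact absurd hs (hKB _ h1)
      · exact ht
    · refine ⟨N.toMDigraph.tgt e, N.toMDigraph.src e, h1, ?_, Or.inr ⟨rfl, rfl⟩⟩
      rcases hxor with ⟨hs, _⟩ | ⟨ht, _⟩
      · exact hs
      · exact absurd ht (hKB _ h1)
  have hbu0 : ∀ e1 e2, ((N.toMDigraph.src e1 ∈ K ∧ N.toMDigraph.tgt e1 ∉ K) ∨
      (N.toMDigraph.tgt e1 ∈ K ∧ N.toMDigraph.src e1 ∉ K)) →
      ((N.toMDigraph.src e2 ∈ K ∧ N.toMDigraph.tgt e2 ∉ K) ∨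
      (N.toMDigraph.tgt e2 ∈ K ∧ N.toMDigraph.src e2 ∉ K)) → e1 = e2 := by
    intro e1 e2 h1 h2
    by_contra hne
    obtain ⟨k1, b1, hk1, hb1, ho1⟩ := hpts e1 h1
    obtain ⟨k2, b2, hk2, hb2, ho2⟩ := hpts e2 h2
    have hcut1 : ¬ N.toMDigraph.Conn (Set.univ \ {e1})
        (N.toMDigraph.src e1) (N.toMDigraph.tgt e1) :=
      not_conn_of_isCutEdge (hbdry_inc e1 h1).1
    have hFsub : F ⊆ Set.univ \ {e1} := fun e he =>
      ⟨trivial, fun hh => hbdry_not_F e1 h1 (Set.mem_singleton_iff.mp hh ▸ he)⟩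
    have hk12 : N.toMDigraph.Conn (Set.univ \ {e1}) k1 k2 :=
      ((hk1 : _).symm.trans (hk2 : _)).mono hFsub
    have hstep2 : N.toMDigraph.Conn (Set.univ \ {e1}) k2 b2 := by
      have hmem : e2 ∈ Set.univ \ {e1} :=
        ⟨trivial, fun hh => hne (Set.mem_singleton_iff.mp hh).symm⟩
      rcases ho2 with ⟨hs, ht⟩ | ⟨hs, ht⟩
      · exact Relation.ReflTransGen.single ⟨e2, hmem, Or.inl ⟨hs, ht⟩⟩
      · exact Relation.ReflTransGen.single ⟨e2, hmem, Or.inr ⟨hs, ht⟩⟩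
    have hBedge : B.edges ⊆ Set.univ \ {e1} := by
      intro e he
      refine ⟨trivial, fun hh => ?_⟩
      rcases Set.mem_singleton_iff.mp hh with rfl
      rcases ho1 with ⟨hs, _⟩ | ⟨_, ht⟩
      · exact hKB k1 hk1 (hs ▸ B.src_mem e he)
      · exact hKB k1 hk1 (ht ▸ B.tgt_mem e he)
    have hb21 : N.toMDigraph.Conn (Set.univ \ {e1}) b2 b1 :=
      (hB.2.1.2 b2 hb2 b1 hb1).mono hBedge
    have htotal : N.toMDigraph.Conn (Set.univ \ {e1}) k1 b1 :=
      (hk12.trans hstep2).trans hb21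
    rcases ho1 with ⟨hs, ht⟩ | ⟨hs, ht⟩
    · exact hcut1 (hs ▸ ht ▸ htotal)
    · exact hcut1 (hs ▸ ht ▸ htotal.symm)
  -- the unique boundary edge
  obtain ⟨fstar, _, hbdryf⟩ := conn_cross (F := Set.univ) (A := K)
    (N.conn (N.leaf a) (N.leaf p)) hKla hKlp
  have hbu : ∀ e, ((N.toMDigraph.src e ∈ K ∧ N.toMDigraph.tgt e ∉ K) ∨
      (N.toMDigraph.tgt e ∈ K ∧ N.toMDigraph.src e ∉ K)) → e = fstar :=
    fun e h => hbu0 e fstar h hbdryf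
  set H' := N.inducedSub {a, p, q, z} with hH'
  by_cases hroot : N.root ∈ K
  · -- the root lies inside K; fstar points out of K
    obtain ⟨ed, _, hs, ht⟩ := dconn_cross (A := K) (root_reaches N (N.leaf p)) hroot hKlp
    have hedf : ed = fstar := hbu ed (Or.inl ⟨hs, ht⟩)
    subst hedf
    set κ := N.toMDigraph.src ed with hκ
    set β := N.toMDigraph.tgt ed with hβ
    have hκK : κ ∈ K := hs
    have hβK : β ∉ K := ht
    have hbwd : ∀ e, N.toMDigraph.src e ∉ K → N.toMDigraph.tgt e ∉ K := by
      intro e h1 h2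
      have := hbu e (Or.inr ⟨h2, h1⟩)
      subst this
      exact h1 hκK
    have hnonretO : ∀ x w, x ∉ K → N.toMDigraph.DConn Set.univ x w → w ∉ K :=
      fun x w hx h => dconn_stay (A := Kᶜ) hbwd hx h
    have hexit : ∀ e, N.toMDigraph.src e ∈ K → N.toMDigraph.tgt e ∉ K → e = ed :=
      fun e h1 h2 => hbu e (Or.inl ⟨h1, h2⟩)
    have hβlp : N.toMDigraph.DConn Set.univ β (N.leaf p) := by
      rcases dconn_exit hexit N.root hroot (N.leaf p) (root_reaches N (N.leaf p)) with
        h | ⟨_, h⟩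
      · exact absurd h hKlp
      · exact h
    have hβlq : N.toMDigraph.DConn Set.univ β (N.leaf q) := by
      rcases dconn_exit hexit N.root hroot (N.leaf q) (root_reaches N (N.leaf q)) with
        h | ⟨_, h⟩
      · exact absurd h hKlq
      · exact h
    -- κ is above the leaf of p
    have hκlp : N.toMDigraph.DConn Set.univ κ (N.leaf p) :=
      Relation.ReflTransGen.head ⟨ed, Set.mem_univ ed, rfl, rfl⟩ hβlp
    -- internal paths
    have hpathK : ∀ (t : X), t ∈ ({a, p, q, z} : Set X) → N.leaf t ∈ K →
        N.toMDigraph.DConn {e ∈ H'.edges |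
          N.toMDigraph.src e ∈ K ∧ N.toMDigraph.tgt e ∈ K} N.root (N.leaf t) := by
      intro t htY htK
      refine dconn_restrict_inv (E0 := Set.univ) (I := (· ∈ K)) ?_ N.root hroot
        (root_reaches N (N.leaf t))
      intro e _ hsrc hrest
      have htgt : N.toMDigraph.tgt e ∈ K := by
        by_contra h2
        exact hnonretO _ _ h2 hrest htK
      exact ⟨htgt, ⟨t, htY, hrest⟩, hsrc, htgt⟩
    have hpathO : ∀ (t : X), t ∈ ({a, p, q, z} : Set X) → N.leaf t ∉ K →
        N.toMDigraph.DConn {e ∈ H'.edges |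
          N.toMDigraph.src e ∉ K ∧ N.toMDigraph.tgt e ∉ K} β (N.leaf t) →
        True := fun _ _ _ _ => trivial
    have hpath0 : ∀ (t : X), t ∈ ({a, p, q, z} : Set X) →
        N.toMDigraph.DConn Set.univ β (N.leaf t) →
        N.toMDigraph.DConn {e ∈ H'.edges |
          N.toMDigraph.src e ∉ K ∧ N.toMDigraph.tgt e ∉ K} β (N.leaf t) := by
      intro t htY hd
      refine dconn_restrict_inv (E0 := Set.univ) (I := (· ∉ K)) ?_ β hβK hd
      intro e _ hsrc hrest
      exact ⟨hbwd e hsrc, ⟨t, htY, hrest⟩, hsrc, hbwd e hsrc⟩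
    have pk2 := ((hpathK a (by simp) hKla).toConn).symm.trans
      ((hpathK z (by simp) hKlz).toConn)
    have pk3 := ((hpath0 p (by simp) hβlp).toConn).symm.trans
      ((hpath0 q (by simp) hβlq).toConn)
    -- connection of root to κ inside H' \ {fstar}
    have hrootκpath : N.toMDigraph.DConn (H'.edges \ {ed}) N.root κ := by
      refine dconn_restrict_inv (E0 := Set.univ) (I := (· ∈ K)) ?_ N.root hroot
        (root_reaches N κ)
      intro e _ hsrc hrest
      have htgt : N.toMDigraph.tgt e ∈ K := by
        by_contra h2
        exact (hnonretO _ _ h2 hrest) hκK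
      refine ⟨htgt, ⟨p, by simp, hrest.trans hκlp⟩, fun hh => ?_⟩
      rcases Set.mem_singleton_iff.mp hh with rfl
      exact hβK htgt
    have hKpathrestrict : ∀ (w : N.toMDigraph.V) (t : X), t ∈ ({a, p, q, z} : Set X) →
        N.leaf t ∈ K → w ∈ K → N.toMDigraph.DConn Set.univ w (N.leaf t) →
        N.toMDigraph.DConn (H'.edges \ {ed}) w (N.leaf t) := by
      intro w t htY htK hwK hd
      refine dconn_restrict_inv (E0 := Set.univ) (I := (· ∈ K)) ?_ w hwK hd
      intro e _ hsrc hrest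
      have htgt : N.toMDigraph.tgt e ∈ K := by
        by_contra h2
        exact hnonretO _ _ h2 hrest htK
      refine ⟨htgt, ⟨t, htY, hrest⟩, fun hh => ?_⟩
      rcases Set.mem_singleton_iff.mp hh with rfl
      exact hβK htgt
    have hκrestrict : ∀ (w : N.toMDigraph.V), w ∈ K →
        N.toMDigraph.DConn Set.univ w κ →
        N.toMDigraph.DConn (H'.edges \ {ed}) w κ := by
      intro w hwK hd
      refine dconn_restrict_inv (E0 := Set.univ) (I := (· ∈ K)) ?_ w hwK hd
      intro e _ hsrc hrest
      have htgt : N.toMDigraph.tgt e ∈ K := by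
        by_contra h2
        exact (hnonretO _ _ h2 hrest) hκK
      refine ⟨htgt, ⟨p, by simp, hrest.trans hκlp⟩, fun hh => ?_⟩
      rcases Set.mem_singleton_iff.mp hh with rfl
      exact hβK htgt
    have hrootla : N.toMDigraph.Conn (H'.edges \ {ed}) N.root (N.leaf a) :=
      (hKpathrestrict N.root a (by simp) hKla hroot (root_reaches N (N.leaf a))).toConn
    have hrootlz : N.toMDigraph.Conn (H'.edges \ {ed}) N.root (N.leaf z) :=
      (hKpathrestrict N.root z (by simp) hKlz hroot (root_reaches N (N.leaf z))).toConn
    have hrootκ : N.toMDigraph.Conn (H'.edges \ {ed}) N.root κ := hrootκpath.toConn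
    have pk5 : ∀ v ∈ K, v ∈ H'.verts →
        N.toMDigraph.Conn (H'.edges \ {ed}) v κ := by
      intro v hvK hvH
      obtain ⟨t, htY, hab⟩ := hvH
      rcases dconn_exit hexit v hvK (N.leaf t) hab with htK | ⟨hvκ, _⟩
      · -- the leaf of t is inside K, hence t is a or z
        have hconnvt : N.toMDigraph.Conn (H'.edges \ {ed}) v (N.leaf t) :=
          (hKpathrestrict v t htY htK hvK hab).toConn
        have hne := htY
        simp only [Set.mem_insert_iff, Set.mem_singleton_iff] at hne
        rcases hne with rfl | rfl | rfl | rfl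
        · exact hconnvt.trans (hrootla.symm.trans hrootκ)
        · exact absurd htK hKlp
        · exact absurd htK hKlq
        · exact hconnvt.trans (hrootlz.symm.trans hrootκ)
      · exact (hκrestrict v hvK hvκ).toConn
    exact part2core N a p q z haz hpq K ed κ β hκK hβK (Or.inr ⟨rfl, rfl⟩) hbu
      hKla hKlz hKlp hKlq pk2 pk3 pk5 hR
  · -- the root lies outside K; fstar points into K
    obtain ⟨ed, _, hs, ht⟩ := dconn_cross (A := Kᶜ) (root_reaches N (N.leaf a)) hroot
      (fun h => h hKla)
    have htK : N.toMDigraph.tgt ed ∈ K := not_not.mp ht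
    have hedf : ed = fstar := hbu ed (Or.inr ⟨htK, hs⟩)
    subst hedf
    set κ := N.toMDigraph.tgt ed with hκ
    set β := N.toMDigraph.src ed with hβ
    have hκK : κ ∈ K := htK
    have hβK : β ∉ K := hs
    have hfwd : ∀ e, N.toMDigraph.src e ∈ K → N.toMDigraph.tgt e ∈ K := by
      intro e h1
      by_contra h2
      have := hbu e (Or.inl ⟨h1, h2⟩)
      subst this
      exact hβK h1
    have hnonret : ∀ x w, x ∈ K → N.toMDigraph.DConn Set.univ x w → w ∈ K :=
      fun x w hx h => dconn_stay (A := K) hfwd hx h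
    have henter : ∀ e, N.toMDigraph.src e ∉ K → N.toMDigraph.tgt e ∈ K → e = ed := by
      intro e h1 h2
      exact hbu e (Or.inr ⟨h2, h1⟩)
    have hκla : N.toMDigraph.DConn Set.univ κ (N.leaf a) :=
      dconn_enter henter N.root hroot (N.leaf a) hKla (root_reaches N (N.leaf a))
    have hκlz : N.toMDigraph.DConn Set.univ κ (N.leaf z) :=
      dconn_enter henter N.root hroot (N.leaf z) hKlz (root_reaches N (N.leaf z))
    have hKpathrestrict : ∀ (w0 : N.toMDigraph.V) (t : X), t ∈ ({a, p, q, z} : Set X) →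
        w0 ∈ K → N.toMDigraph.DConn Set.univ w0 (N.leaf t) →
        N.toMDigraph.DConn (H'.edges \ {ed}) w0 (N.leaf t) := by
      intro w0 t htY hwK hd
      refine dconn_restrict_inv (E0 := Set.univ) (I := (· ∈ K)) ?_ w0 hwK hd
      intro e _ hsrc hrest
      refine ⟨hfwd e hsrc, ⟨t, htY, hrest⟩, fun hh => ?_⟩
      rcases Set.mem_singleton_iff.mp hh with rfl
      exact hβK hsrc
    have hS1path : ∀ (w0 : N.toMDigraph.V) (t : X), t ∈ ({a, p, q, z} : Set X) →
        w0 ∈ K → N.toMDigraph.DConn Set.univ w0 (N.leaf t) →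
        N.toMDigraph.DConn {e ∈ H'.edges |
          N.toMDigraph.src e ∈ K ∧ N.toMDigraph.tgt e ∈ K} w0 (N.leaf t) := by
      intro w0 t htY hwK hd
      refine dconn_restrict_inv (E0 := Set.univ) (I := (· ∈ K)) ?_ w0 hwK hd
      intro e _ hsrc hrest
      exact ⟨hfwd e hsrc, ⟨t, htY, hrest⟩, hsrc, hfwd e hsrc⟩
    have hS0path : ∀ (t : X), t ∈ ({a, p, q, z} : Set X) → N.leaf t ∉ K →
        N.toMDigraph.DConn {e ∈ H'.edges |
          N.toMDigraph.src e ∉ K ∧ N.toMDigraph.tgt e ∉ K} N.root (N.leaf t) := by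
      intro t htY htO
      refine dconn_restrict_inv (E0 := Set.univ) (I := (· ∉ K)) ?_ N.root hroot
        (root_reaches N (N.leaf t))
      intro e _ hsrc hrest
      have htgt : N.toMDigraph.tgt e ∉ K := by
        intro h2
        exact htO (hnonret _ _ h2 hrest)
      exact ⟨htgt, ⟨t, htY, hrest⟩, hsrc, htgt⟩
    have pk2 := ((hS1path κ a (by simp) hκK hκla).toConn).symm.trans
      ((hS1path κ z (by simp) hκK hκlz).toConn)
    have pk3 := ((hS0path p (by simp) hKlp).toConn).symm.trans
      ((hS0path q (by simp) hKlq).toConn)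
    have hκla' : N.toMDigraph.Conn (H'.edges \ {ed}) κ (N.leaf a) :=
      (hKpathrestrict κ a (by simp) hκK hκla).toConn
    have hκlz' : N.toMDigraph.Conn (H'.edges \ {ed}) κ (N.leaf z) :=
      (hKpathrestrict κ z (by simp) hκK hκlz).toConn
    have pk5 : ∀ v ∈ K, v ∈ H'.verts →
        N.toMDigraph.Conn (H'.edges \ {ed}) v κ := by
      intro v hvK hvH
      obtain ⟨t, htY, hab⟩ := hvH
      have htK : N.leaf t ∈ K := hnonret v (N.leaf t) hvK hab
      have hconnvt : N.toMDigraph.Conn (H'.edges \ {ed}) v (N.leaf t) :=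
        (hKpathrestrict v t htY hvK hab).toConn
      have hne := htY
      simp only [Set.mem_insert_iff, Set.mem_singleton_iff] at hne
      rcases hne with rfl | rfl | rfl | rfl
      · exact hconnvt.trans hκla'.symm
      · exact absurd htK hKlp
      · exact absurd htK hKlq
      · exact hconnvt.trans hκlz'.symm
    exact part2core N a p q z haz hpq K ed κ β hκK hβK (Or.inl ⟨rfl, rfl⟩) hbu
      hKla hKlz hKlp hKlq pk2 pk3 pk5 hR

end Part2

/-- B-quartet Inference Rule.
Let `N⁺` be a rooted binary phylogenetic network on `n ≥ 5` taxa and suppose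
`{a,b,c,d}` and `{b,c,d,e}` are B-quartets on `N⁺`.  If on its induced
4-taxon network any one of `{a,b,c,e}`, `{a,b,d,e}`, `{a,c,d,e}` is either
(a) a T-quartet whose associated resolved quartet separates `a` and `e`, or
(b) a B-quartet, then all three of `{a,b,c,e}`, `{a,b,d,e}`, `{a,c,d,e}` are
B-quartets on `N⁺`. -/
theorem stmt_3 {X : Type} (N : PhyloNetwork X) (hn : 5 ≤ Nat.card X)
    (a b c d e : X) (hpair : List.Pairwise (· ≠ ·) [a, b, c, d, e])
    (h1 : BQuartetIn (top N.toMDigraph) N.leaf a b c d)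
    (h2 : BQuartetIn (top N.toMDigraph) N.leaf b c d e)
    (h3 : RuleHyp N a b c e ∨ RuleHyp N a b d e ∨ RuleHyp N a c d e) :
    BQuartetIn (top N.toMDigraph) N.leaf a b c e ∧
    BQuartetIn (top N.toMDigraph) N.leaf a b d e ∧
    BQuartetIn (top N.toMDigraph) N.leaf a c d e := by
  classical
  -- distinctness of the taxa
  obtain ⟨ha', hpair⟩ := List.pairwise_cons.mp hpair
  obtain ⟨hb', hpair⟩ := List.pairwise_cons.mp hpair
  obtain ⟨hc', hpair⟩ := List.pairwise_cons.mp hpair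
  obtain ⟨hd', _⟩ := List.pairwise_cons.mp hpair
  have hab : a ≠ b := ha' b (by simp)
  have hac : a ≠ c := ha' c (by simp)
  have had : a ≠ d := ha' d (by simp)
  have hae : a ≠ e := ha' e (by simp)
  have hbc : b ≠ c := hb' c (by simp)
  have hbd : b ≠ d := hb' d (by simp)
  have hbe : b ≠ e := hb' e (by simp)
  have hcd : c ≠ d := hc' d (by simp)
  have hce : c ≠ e := hc' e (by simp)
  have hde : d ≠ e := hd' e (by simp)
  obtain ⟨B₁, hB₁, hd₁⟩ := h1
  obtain ⟨B₂, hB₂, hd₂⟩ := h2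
  have topsep : ∀ B : Subgraph N.toMDigraph,
      {e ∈ (top N.toMDigraph).edges | ¬ IncidentCut (top N.toMDigraph) B e}
      = {e | ¬ IncidentCut (top N.toMDigraph) B e} := by
    intro B
    ext e
    simp [MDigraph.top]
  -- pair separations from the two B-quartet hypotheses
  have p1 : ∀ {s t : X}, s ∈ ({a, b, c, d} : Set X) → t ∈ ({a, b, c, d} : Set X) →
      s ≠ t → ¬ N.toMDigraph.Conn {e | ¬ IncidentCut (top N.toMDigraph) B₁ e}
        (N.leaf s) (N.leaf t) := by
    intro s t hs ht hst
    have := hd₁ s hs t ht hst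
    rwa [topsep] at this
  have p2 : ∀ {s t : X}, s ∈ ({b, c, d, e} : Set X) → t ∈ ({b, c, d, e} : Set X) →
      s ≠ t → ¬ N.toMDigraph.Conn {e | ¬ IncidentCut (top N.toMDigraph) B₂ e}
        (N.leaf s) (N.leaf t) := by
    intro s t hs ht hst
    have := hd₂ s hs t ht hst
    rwa [topsep] at this
  -- the two blobs have the same node set
  have hveq : B₁.verts = B₂.verts := by
    refine blob_verts_eq hB₁ hB₂ N.conn
      (p1 (by simp) (by simp) hbc) (p1 (by simp) (by simp) hbd)
      (p1 (by simp) (by simp) hcd)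
      (p2 (by simp) (by simp) hbc) (p2 (by simp) (by simp) hbd)
      (p2 (by simp) (by simp) hcd)
  have hFeq : {e | ¬ IncidentCut (top N.toMDigraph) B₂ e}
      = {e | ¬ IncidentCut (top N.toMDigraph) B₁ e} := by
    ext e
    unfold IncidentCut
    rw [hveq]
  have p2' : ∀ {s t : X}, s ∈ ({b, c, d, e} : Set X) → t ∈ ({b, c, d, e} : Set X) →
      s ≠ t → ¬ N.toMDigraph.Conn {e | ¬ IncidentCut (top N.toMDigraph) B₁ e}
        (N.leaf s) (N.leaf t) := by
    intro s t hs ht hst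
    rw [← hFeq]
    exact p2 hs ht hst
  -- the leaf of a is not a node of B₁
  have hlaB : N.leaf a ∉ B₁.verts :=
    PhyloNetwork.leaf_not_in_blob N hB₁ (fun h => hab.symm (N.leaf_inj h))
      (fun h => hac.symm (N.leaf_inj h)) (p1 (by simp) (by simp) hbc)
  -- the crucial pair: a and e are separated
  have hPae : ¬ N.toMDigraph.Conn {e | ¬ IncidentCut (top N.toMDigraph) B₁ e}
      (N.leaf a) (N.leaf e) := by
    intro hW
    rcases h3 with hR | hR | hR
    · exact part2 N hB₁ hae hbc hlaB (p1 (by simp) (by simp) hab)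
        (p1 (by simp) (by simp) hac) hW hR
    · exact part2 N hB₁ hae hbd hlaB (p1 (by simp) (by simp) hab)
        (p1 (by simp) (by simp) had) hW hR
    · exact part2 N hB₁ hae hcd hlaB (p1 (by simp) (by simp) hac)
        (p1 (by simp) (by simp) had) hW hR
  -- collect all ten pair separations (with respect to B₁)
  set P : X → X → Prop := fun s t =>
    ¬ N.toMDigraph.Conn {e | ¬ IncidentCut (top N.toMDigraph) B₁ e}
      (N.leaf s) (N.leaf t) with hP
  have Psymm : ∀ {s t : X}, P s t → P t s := fun h hc => h hc.symm
  have Pab : P a b := p1 (by simp) (by simp) hab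
  have Pac : P a c := p1 (by simp) (by simp) hac
  have Pad : P a d := p1 (by simp) (by simp) had
  have Pae : P a e := hPae
  have Pbc : P b c := p1 (by simp) (by simp) hbc
  have Pbd : P b d := p1 (by simp) (by simp) hbd
  have Pbe : P b e := p2' (by simp) (by simp) hbe
  have Pcd : P c d := p1 (by simp) (by simp) hcd
  have Pce : P c e := p2' (by simp) (by simp) hce
  have Pde : P d e := p2' (by simp) (by simp) hde
  have Pba := Psymm Pab
  have Pca := Psymm Pac
  have Pda := Psymm Pad
  have Pea := Psymm Pae
  have Pcb := Psymm Pbc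
  have Pdb := Psymm Pbd
  have Peb := Psymm Pbe
  have Pdc := Psymm Pcd
  have Pec := Psymm Pce
  have Ped := Psymm Pde
  have mkdet : ∀ (S : Set X), (∀ s ∈ S, ∀ t ∈ S, s ≠ t → P s t) →
      DeterminesIn (top N.toMDigraph) B₁ N.leaf S := by
    intro S hS s hs t ht hst
    rw [topsep]
    exact hS s hs t ht hst
  refine ⟨⟨B₁, hB₁, mkdet _ ?_⟩, ⟨B₁, hB₁, mkdet _ ?_⟩, ⟨B₁, hB₁, mkdet _ ?_⟩⟩ <;>
    (intro s hs t ht hst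
     simp only [Set.mem_insert_iff, Set.mem_singleton_iff] at hs ht
     rcases hs with rfl | rfl | rfl | rfl <;> rcases ht with rfl | rfl | rfl | rfl <;>
       first
         | exact absurd rfl hst
         | assumption)
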